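/- arXiv:1409.2536 — 3 statements merged into one kernel-verified Lean document; each statement's English description precedes it below -/
import Mathlib

section
/- Let W be a classical–quantum channel from a finite alphabet X with |X| = a into the density operators on ℂ^d. For every x^n ∈ X^n of type P and every δ > 0, the conditional variance-typical projector satisfies Tr(W_{x^n} · Π^n_{W,δ}(x^n)) ≥ 1 − ad/δ². -/
open Matrix BigOperators Finset
open scoped Classical ComplexOrder

noncomputable section

/-- Square complex matrices of size `d` (operators on `ℂ^d`). -/
abbrev Mat (d : ℕ) := Matrix (Fin d) (Fin d) ℂ

/-- Operators on the `n`-fold tensor power `(ℂ^d)^{⊗n}`, indexed by `Fin n → Fin d`. -/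
abbrev MatPow (d n : ℕ) := Matrix (Fin n → Fin d) (Fin n → Fin d) ℂ

/-- Tensor product `A 0 ⊗ A 1 ⊗ ⋯ ⊗ A (n-1)` of a family of `d × d` matrices. -/
def tensorPow {d n : ℕ} (A : Fin n → Mat d) : MatPow d n :=
  Matrix.of fun j k => ∏ i, A i (j i) (k i)

/-- Exponential to base 2. -/
def exp2 (t : ℝ) : ℝ := (2 : ℝ) ^ t

/-- `P` is a probability distribution on the finite set `X`. -/
def IsProbDist {X : Type*} [Fintype X] (P : X → ℝ) : Prop :=
  (∀ x, 0 ≤ P x) ∧ ∑ x, P x = 1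

/-- `ρ` is a density operator (a state): positive semidefinite with trace one. -/
def IsState {ι : Type*} [Fintype ι] [DecidableEq ι] (ρ : Matrix ι ι ℂ) : Prop :=
  ρ.PosSemidef ∧ ρ.trace = 1

/-- `N(x|x^n)`: number of occurrences of the letter `x` in the sequence `xs`. -/
def countIn {X : Type*} {n : ℕ} (x : X) (xs : Fin n → X) : ℕ :=
  (Finset.univ.filter fun i => xs i = x).card

/-- The variance-typical set `T^n_{P,δ}`. -/
def typicalSet {X : Type*} [Fintype X] (n : ℕ) (P : X → ℝ) (δ : ℝ) :
    Finset (Fin n → X) :=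
  Finset.univ.filter fun xs => ∀ x : X,
    |(countIn x xs : ℝ) - n * P x| ≤ δ * Real.sqrt n * Real.sqrt (P x * (1 - P x))

/-- Product (i.i.d.) probability `P^{⊗n}(A)` of a set `A` of sequences. -/
def prodProb {X : Type*} [Fintype X] {n : ℕ} (P : X → ℝ) (A : Finset (Fin n → X)) : ℝ :=
  ∑ xs ∈ A, ∏ i, P (xs i)

/-- Shannon entropy to base 2. -/
def shannonEntropy {X : Type*} [Fintype X] (P : X → ℝ) : ℝ :=
  -∑ x, P x * Real.logb 2 (P x)

/-- von Neumann entropy to base 2, `H(ρ) = -Tr(ρ log₂ ρ)`, via the eigenvalues. -/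
def vnEntropy {d : ℕ} (ρ : Mat d) : ℝ :=
  if h : ρ.IsHermitian then -∑ i, h.eigenvalues i * Real.logb 2 (h.eigenvalues i) else 0

/-- The constant `K = 2 log₂(e) / e`. -/
def Kconst : ℝ := 2 * Real.logb 2 (Real.exp 1) / Real.exp 1

/-- A diagonalization `ρ = Σ_j R j • π j` into one-dimensional mutually orthogonal
eigenprojectors, with eigenvalue list `R` a probability distribution. -/
def IsDiagonalization {d : ℕ} (ρ : Mat d) (R : Fin d → ℝ) (π : Fin d → Mat d) : Prop :=
  (∀ j, (π j).PosSemidef) ∧ (∀ j, π j * π j = π j) ∧ (∀ j, (π j).trace = 1) ∧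
    (∀ j k, j ≠ k → π j * π k = 0) ∧ (∑ j, π j = 1) ∧
    ρ = ∑ j, (R j : ℂ) • π j ∧ IsProbDist R

/-- The variance-typical projector `Π^n_{ρ,δ}` of a state with fixed diagonalization
`(R, π)`. -/
def typicalProj {d : ℕ} (n : ℕ) (R : Fin d → ℝ) (π : Fin d → Mat d) (δ : ℝ) : MatPow d n :=
  ∑ js ∈ typicalSet n R δ, tensorPow fun i => π (js i)

/-- `B` is an `η`-shadow of the state `σ`: `0 ≤ B ≤ 1` and `Tr(σB) ≥ η`. -/
def IsShadow {ι : Type*} [Fintype ι] [DecidableEq ι] (σ B : Matrix ι ι ℂ) (η : ℝ) : Prop :=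
  B.PosSemidef ∧ ((1 : Matrix ι ι ℂ) - B).PosSemidef ∧ η ≤ (Matrix.trace (σ * B)).re

/-- Average state `PW = Σ_x P(x) W_x` of a cq-channel under input distribution `P`. -/
def avgState {X : Type*} [Fintype X] {d : ℕ} (P : X → ℝ) (W : X → Mat d) : Mat d :=
  ∑ x, (P x : ℂ) • W x

/-- Conditional von Neumann entropy `H(W|P) = Σ_x P(x) H(W_x)`. -/
def condEntropy {X : Type*} [Fintype X] {d : ℕ} (P : X → ℝ) (W : X → Mat d) : ℝ :=
  ∑ x, P x * vnEntropy (W x)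

/-- Mutual information `I(P;W) = H(PW) − H(W|P)`. -/
def mutualInfo {X : Type*} [Fintype X] {d : ℕ} (P : X → ℝ) (W : X → Mat d) : ℝ :=
  vnEntropy (avgState P W) - condEntropy P W

/-- Capacity `C(W) = max_P I(P;W)`. -/
def capacity {X : Type*} [Fintype X] {d : ℕ} (W : X → Mat d) : ℝ :=
  sSup {c | ∃ P : X → ℝ, IsProbDist P ∧ c = mutualInfo P W}

/-- `(f, D)` (with message set `M` inside the outcome index set `M'`) is an
`(n,λ)`-code for the cq-channel `W`: the `D m` are positive semidefinite, sum to the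
identity, and each message is decoded correctly with probability at least `1 - λ`. -/
def IsCode {X : Type*} [Fintype X] {d n : ℕ} (W : X → Mat d) (lam : ℝ)
    {M' : Type*} [Fintype M'] (M : Finset M') (f : M' → Fin n → X)
    (D : M' → MatPow d n) : Prop :=
  (∀ m, (D m).PosSemidef) ∧ (∑ m, D m = 1) ∧
    ∀ m ∈ M, 1 - lam ≤ (Matrix.trace (tensorPow (fun i => W (f m i)) * D m)).re

/-- `N(n,λ)`: maximal size of an `(n,λ)`-code for `W`. -/
def maxCodeSize {X : Type*} [Fintype X] (d : ℕ) (W : X → Mat d) (n : ℕ) (lam : ℝ) : ℕ :=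
  sSup {k | ∃ (M' : Type) (_ : Fintype M') (M : Finset M') (f : M' → Fin n → X)
    (D : M' → MatPow d n), IsCode W lam M f D ∧ M.card = k}

/-- Trace norm `‖A‖₁ = Tr|A|`: the sum of the singular values. -/
def traceNorm {ι : Type*} [Fintype ι] [DecidableEq ι] (A : Matrix ι ι ℂ) : ℝ :=
  ∑ i, Real.sqrt ((Matrix.posSemidef_conjTranspose_mul_self A).1.eigenvalues i)

/-- Trace distance `D(ρ,σ) = ½‖ρ−σ‖₁`. -/
def traceDist {ι : Type*} [Fintype ι] [DecidableEq ι] (ρ σ : Matrix ι ι ℂ) : ℝ :=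
  traceNorm (ρ - σ) / 2

/-- (Pure-state) fidelity `F(ρ,σ) = Tr(ρσ)`. -/
def fidelity {ι : Type*} [Fintype ι] [DecidableEq ι] (ρ σ : Matrix ι ι ℂ) : ℝ :=
  (Matrix.trace (ρ * σ)).re

/-- A pure state: the rank-one orthogonal projector `|ψ⟩⟨ψ|` onto the span of a
unit vector `ψ`. -/
def IsPureState {ι : Type*} [Fintype ι] (ρ : Matrix ι ι ℂ) : Prop :=
  ∃ ψ : ι → ℂ, (∑ i, star (ψ i) * ψ i) = 1 ∧ ρ = Matrix.vecMulVec ψ (star ψ)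

/-- The set of eigenvalue-index sequences `js` that are variance-typical, with
constant `δ`, for the distribution `q x` on each block `I_x = {i : xs i = x}`. -/
def condTypicalSet {X : Type*} [Fintype X] {n d : ℕ} (xs : Fin n → X)
    (q : X → Fin d → ℝ) (δ : ℝ) : Finset (Fin n → Fin d) :=
  Finset.univ.filter fun js => ∀ (x : X) (k : Fin d),
    |((Finset.univ.filter fun i => xs i = x ∧ js i = k).card : ℝ) - (countIn x xs : ℝ) * q x k|
      ≤ δ * Real.sqrt (countIn x xs) * Real.sqrt (q x k * (1 - q x k))

/-- Conditional variance-typical projector `Π^n_{W,δ}(x^n) = ⊗_{x∈X} Π^{I_x}_{W_x,δ}`,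
with respect to fixed diagonalizations `W_x = Σ_j (q x j) • (π x j)`. -/
def condTypicalProj {X : Type*} [Fintype X] {d : ℕ} {n : ℕ} (xs : Fin n → X)
    (q : X → Fin d → ℝ) (π : X → Fin d → Mat d) (δ : ℝ) : MatPow d n :=
  ∑ js ∈ condTypicalSet xs q δ, tensorPow fun i => π (xs i) (js i)

section AuxLemmas

lemma sum_pi_prod {n : ℕ} {β : Fin n → Type*} [∀ i, Fintype (β i)] {R : Type*} [CommSemiring R]
    (f : ∀ i, β i → R) :
    ∑ js : (∀ i, β i), ∏ i, f i (js i) = ∏ i, ∑ b, f i b := by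
  rw [Finset.prod_univ_sum, Fintype.piFinset_univ]

lemma trace_tensorPow_mul {d n : ℕ} (A B : Fin n → Mat d) :
    Matrix.trace (tensorPow A * tensorPow B) = ∏ i, Matrix.trace (A i * B i) := by
  have key : ∑ g : Fin n → Fin d × Fin d, ∏ i, (A i (g i).1 (g i).2 * B i (g i).2 (g i).1)
      = ∏ i, ∑ p : Fin d × Fin d, A i p.1 p.2 * B i p.2 p.1 :=
    sum_pi_prod (fun i (p : Fin d × Fin d) => A i p.1 p.2 * B i p.2 p.1)
  calc Matrix.trace (tensorPow A * tensorPow B)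
      = ∑ j : Fin n → Fin d, ∑ k : Fin n → Fin d, ∏ i, (A i (j i) (k i) * B i (k i) (j i)) := by
        simp [Matrix.trace, Matrix.diag, Matrix.mul_apply, tensorPow, Finset.prod_mul_distrib]
    _ = ∑ g : Fin n → Fin d × Fin d, ∏ i, (A i (g i).1 (g i).2 * B i (g i).2 (g i).1) := by
        have h2 : ∑ p : (Fin n → Fin d) × (Fin n → Fin d),
              ∏ i, (A i (p.1 i) (p.2 i) * B i (p.2 i) (p.1 i))
            = ∑ j : Fin n → Fin d, ∑ k : Fin n → Fin d, ∏ i, (A i (j i) (k i) * B i (k i) (j i)) :=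
          Fintype.sum_prod_type (f := fun p : (Fin n → Fin d) × (Fin n → Fin d) => ∏ i, (A i (p.1 i) (p.2 i) * B i (p.2 i) (p.1 i)))
        rw [← h2]
        exact (Fintype.sum_equiv (Equiv.arrowProdEquivProdArrow (Fin n) (fun _ => Fin d) (fun _ => Fin d)) (fun g => ∏ i, (A i (g i).1 (g i).2 * B i (g i).2 (g i).1))
          (fun p => ∏ i, (A i (p.1 i) (p.2 i) * B i (p.2 i) (p.1 i))) (fun g => rfl)).symm
    _ = ∏ i, ∑ p : Fin d × Fin d, A i p.1 p.2 * B i p.2 p.1 := key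
    _ = ∏ i, Matrix.trace (A i * B i) := by
        refine Finset.prod_congr rfl fun i _ => ?_
        simp [Matrix.trace, Matrix.diag, Matrix.mul_apply, Fintype.sum_prod_type, mul_comm]

lemma trace_diag_mul {d : ℕ} {ρ : Mat d} {R : Fin d → ℝ} {π : Fin d → Mat d}
    (h : IsDiagonalization ρ R π) (k : Fin d) :
    Matrix.trace (ρ * π k) = (R k : ℂ) := by
  obtain ⟨hpsd, hidem, htr, horth, hsum, hρ, hprob⟩ := h
  rw [hρ, Finset.sum_mul, Matrix.trace_sum]
  rw [Finset.sum_eq_single k]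
  · rw [Matrix.smul_mul, hidem k, Matrix.trace_smul, htr k, smul_eq_mul, mul_one]
  · intro j _ hjk
    rw [Matrix.smul_mul, horth j k hjk, Matrix.trace_smul, Matrix.trace_zero, smul_zero]
  · intro h; exact absurd (Finset.mem_univ k) h

/-- Covariance term vanishes for distinct coordinates; diagonal gives second moment. -/
lemma variance_identity {n d : ℕ} (w : Fin n → Fin d → ℝ) (c : Fin n → Fin d → ℝ)
    (hw1 : ∀ i, ∑ b, w i b = 1) (hc0 : ∀ i, ∑ b, w i b * c i b = 0) :
    ∑ js : Fin n → Fin d, (∏ i, w i (js i)) * (∑ i, c i (js i)) ^ 2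
      = ∑ i, ∑ b, w i b * (c i b) ^ 2 := by
  have expand : ∀ js : Fin n → Fin d,
      (∏ i, w i (js i)) * (∑ i, c i (js i)) ^ 2
        = ∑ i, ∑ i', (∏ l, w l (js l)) * (c i (js i) * c i' (js i')) := by
    intro js
    rw [sq, Finset.sum_mul_sum]
    rw [Finset.mul_sum]
    refine Finset.sum_congr rfl fun i _ => ?_
    rw [Finset.mul_sum]
  simp_rw [expand]
  rw [Finset.sum_comm]
  refine Finset.sum_congr rfl fun i _ => ?_
  rw [Finset.sum_comm]
  -- now : ∑ i', ∑ js, (∏ l, w l (js l)) * (c i (js i) * c i' (js i')) = ∑ b, w i b * c i b ^ 2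
  rw [Finset.sum_eq_single i]
  · -- diagonal term
    have hprod : ∀ js : Fin n → Fin d,
        (∏ l, w l (js l)) * (c i (js i) * c i (js i))
          = ∏ l, (w l (js l) * (if l = i then c l (js l) * c l (js l) else 1)) := by
      intro js
      rw [Finset.prod_mul_distrib, Finset.prod_ite_eq' Finset.univ i
        (fun l => c l (js l) * c l (js l))]
      simp
    simp_rw [hprod]
    rw [sum_pi_prod (fun l b => w l b * (if l = i then c l b * c l b else 1))]
    rw [Finset.prod_eq_single i]
    · simp [sq, mul_assoc]
    · intro l _ hli
      simp only [if_neg hli, mul_one]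
      exact hw1 l
    · intro h; exact absurd (Finset.mem_univ i) h
  · -- off-diagonal terms vanish
    intro i' _ hii'
    have hprod : ∀ js : Fin n → Fin d,
        (∏ l, w l (js l)) * (c i (js i) * c i' (js i'))
          = ∏ l, (w l (js l) * ((if l = i then c l (js l) else 1)
              * (if l = i' then c l (js l) else 1))) := by
      intro js
      rw [Finset.prod_mul_distrib, Finset.prod_mul_distrib,
        Finset.prod_ite_eq' Finset.univ i (fun l => c l (js l)),
        Finset.prod_ite_eq' Finset.univ i' (fun l => c l (js l))]
      simp [mul_assoc]
    simp_rw [hprod]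
    rw [sum_pi_prod (fun l b => w l b * ((if l = i then c l b else 1)
        * (if l = i' then c l b else 1)))]
    apply Finset.prod_eq_zero (Finset.mem_univ i)
    have hb : ∀ b, w i b * ((if i = i then c i b else 1) * (if i = i' then c i b else 1))
        = w i b * c i b := by
      intro b; rw [if_pos rfl, if_neg (Ne.symm hii'), mul_one]
    rw [Finset.sum_congr rfl fun b _ => hb b]
    exact hc0 i
  · intro h; exact absurd (Finset.mem_univ i) h

open scoped Classical in
lemma chebyshev_bound {n d : ℕ} (w : Fin n → Fin d → ℝ) (c : Fin n → Fin d → ℝ)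
    (hw0 : ∀ i b, 0 ≤ w i b) (hw1 : ∀ i, ∑ b, w i b = 1)
    (hc0 : ∀ i, ∑ b, w i b * c i b = 0)
    (t : ℝ) (ht : 0 ≤ t) (ht2 : t ^ 2 = ∑ i, ∑ b, w i b * (c i b) ^ 2)
    (δ : ℝ) (hδ : 0 < δ) :
    ∑ js ∈ Finset.univ.filter (fun js : Fin n → Fin d => ¬ |∑ i, c i (js i)| ≤ δ * t),
      (∏ i, w i (js i)) ≤ 1 / δ ^ 2 := by
  set B := Finset.univ.filter (fun js : Fin n → Fin d => ¬ |∑ i, c i (js i)| ≤ δ * t) with hB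
  have hpnn : ∀ js : Fin n → Fin d, 0 ≤ ∏ i, w i (js i) :=
    fun js => Finset.prod_nonneg fun i _ => hw0 i (js i)
  have hbad : ∀ js ∈ B, δ ^ 2 * t ^ 2 < (∑ i, c i (js i)) ^ 2 := by
    intro js hjs
    rw [hB, Finset.mem_filter] at hjs
    have h1 : δ * t < |∑ i, c i (js i)| := lt_of_not_ge hjs.2
    have h2 : 0 ≤ δ * t := mul_nonneg hδ.le ht
    calc δ ^ 2 * t ^ 2 = (δ * t) ^ 2 := by ring
      _ < |∑ i, c i (js i)| ^ 2 := by
          exact pow_lt_pow_left₀ h1 h2 (by norm_num)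
      _ = (∑ i, c i (js i)) ^ 2 := sq_abs _
  have hvar : ∑ js ∈ B, (∏ i, w i (js i)) * (∑ i, c i (js i)) ^ 2 ≤ t ^ 2 := by
    rw [ht2, ← variance_identity w c hw1 hc0]
    exact Finset.sum_le_sum_of_subset_of_nonneg (Finset.subset_univ B)
      (fun js _ _ => mul_nonneg (hpnn js) (sq_nonneg _))
  by_cases hten : t = 0
  · have hz : ∀ js ∈ B, (∏ i, w i (js i)) = 0 := by
      intro js hjs
      have h1 := hbad js hjs
      rw [hten] at h1
      have h2 : 0 < (∑ i, c i (js i)) ^ 2 := by nlinarith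
      have h3 : (∏ i, w i (js i)) * (∑ i, c i (js i)) ^ 2 ≤ 0 := by
        have := hvar
        rw [hten] at this
        have hnn : ∀ js' ∈ B, 0 ≤ (∏ i, w i (js' i)) * (∑ i, c i (js' i)) ^ 2 :=
          fun js' _ => mul_nonneg (hpnn js') (sq_nonneg _)
        calc (∏ i, w i (js i)) * (∑ i, c i (js i)) ^ 2
            ≤ ∑ js' ∈ B, (∏ i, w i (js' i)) * (∑ i, c i (js' i)) ^ 2 :=
              Finset.single_le_sum hnn hjs
          _ ≤ 0 := by simpa using this
      nlinarith [hpnn js]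
    rw [Finset.sum_eq_zero hz]
    positivity
  · have htpos : 0 < t := lt_of_le_of_ne ht (Ne.symm hten)
    have key : δ ^ 2 * t ^ 2 * ∑ js ∈ B, (∏ i, w i (js i)) ≤ t ^ 2 := by
      calc δ ^ 2 * t ^ 2 * ∑ js ∈ B, (∏ i, w i (js i))
          = ∑ js ∈ B, (∏ i, w i (js i)) * (δ ^ 2 * t ^ 2) := by rw [Finset.mul_sum]; exact Finset.sum_congr rfl fun x _ => mul_comm _ _
        _ ≤ ∑ js ∈ B, (∏ i, w i (js i)) * (∑ i, c i (js i)) ^ 2 :=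
            Finset.sum_le_sum fun js hjs =>
              mul_le_mul_of_nonneg_left (hbad js hjs).le (hpnn js)
        _ ≤ t ^ 2 := hvar
    rw [div_eq_inv_mul, ← mul_le_mul_iff_right₀ (by positivity : (0:ℝ) < δ ^ 2 * t ^ 2)]
    calc δ ^ 2 * t ^ 2 * ∑ js ∈ B, (∏ i, w i (js i)) ≤ t ^ 2 := key
      _ = δ ^ 2 * t ^ 2 * ((δ ^ 2)⁻¹ * 1) := by field_simp

end AuxLemmas

/-- **Lemma 4, part 1 (Conditional typical projector, trace).** For `x^n` of type `P`,
`Tr(W_{x^n} Π^n_{W,δ}(x^n)) ≥ 1 − ad/δ²`. -/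
theorem condTypicalProj_trace_channel {X : Type} [Fintype X] {d : ℕ}
    (W : X → Mat d) (hW : ∀ x, IsState (W x))
    (q : X → Fin d → ℝ) (π : X → Fin d → Mat d)
    (hdiag : ∀ x, IsDiagonalization (W x) (q x) (π x))
    (n : ℕ) (hn : 0 < n) (xs : Fin n → X) (P : X → ℝ) (hP : IsProbDist P)
    (htype : ∀ x, (countIn x xs : ℝ) = n * P x)
    (δ : ℝ) (hδ : 0 < δ) :
    1 - (Fintype.card X : ℝ) * d / δ ^ 2
      ≤ (Matrix.trace (tensorPow (fun i => W (xs i)) * condTypicalProj xs q π δ)).re := by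
  have hq0 : ∀ x b, 0 ≤ q x b := fun x => ((hdiag x).2.2.2.2.2.2).1
  have hq1 : ∀ x, ∑ b, q x b = 1 := fun x => ((hdiag x).2.2.2.2.2.2).2
  have hqle1 : ∀ x k, q x k ≤ 1 := by
    intro x k
    rw [← hq1 x]
    exact Finset.single_le_sum (fun b _ => hq0 x b) (Finset.mem_univ k)
  set S := condTypicalSet xs q δ with hS
  set p : (Fin n → Fin d) → ℝ := fun js => ∏ i, q (xs i) (js i) with hp
  have hpnn : ∀ js, 0 ≤ p js := fun js => Finset.prod_nonneg fun i _ => hq0 _ _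
  -- Step 1: the trace equals the probability of the typical set
  have htr1 : ∀ js : Fin n → Fin d,
      Matrix.trace (tensorPow (fun i => W (xs i)) * tensorPow (fun i => π (xs i) (js i)))
        = ((p js : ℝ) : ℂ) := by
    intro js
    rw [trace_tensorPow_mul,
      Finset.prod_congr rfl fun i _ => trace_diag_mul (hdiag (xs i)) (js i)]
    push_cast [hp]
    rfl
  have htrace : Matrix.trace (tensorPow (fun i => W (xs i)) * condTypicalProj xs q π δ)
      = ((∑ js ∈ S, p js : ℝ) : ℂ) := by
    rw [condTypicalProj, Finset.mul_sum, Matrix.trace_sum,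
      Finset.sum_congr rfl fun js _ => htr1 js]
    push_cast
    rfl
  rw [htrace, Complex.ofReal_re]
  -- Step 2: probability bound
  have htot : ∑ js : Fin n → Fin d, p js = 1 := by
    rw [hp, sum_pi_prod (fun i b => q (xs i) b)]
    exact Finset.prod_eq_one fun i _ => hq1 (xs i)
  -- Per-pair Chebyshev bound
  have key : ∀ (x : X) (k : Fin d),
      ∑ js ∈ Finset.univ.filter (fun js : Fin n → Fin d =>
        ¬ |((Finset.univ.filter fun i => xs i = x ∧ js i = k).card : ℝ)
            - (countIn x xs : ℝ) * q x k|
          ≤ δ * Real.sqrt (countIn x xs) * Real.sqrt (q x k * (1 - q x k))),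
        p js ≤ 1 / δ ^ 2 := by
    intro x k
    set c : Fin n → Fin d → ℝ :=
      fun i b => if xs i = x then (if b = k then 1 else 0) - q x k else 0 with hc
    have hsumc : ∀ js : Fin n → Fin d,
        ∑ i, c i (js i) = ((Finset.univ.filter fun i => xs i = x ∧ js i = k).card : ℝ)
          - (countIn x xs : ℝ) * q x k := by
      intro js
      have hterm : ∀ i, c i (js i) = (if xs i = x ∧ js i = k then (1:ℝ) else 0)
          - (if xs i = x then q x k else 0) := by
        intro i
        by_cases h1 : xs i = x
        · by_cases h2 : js i = k <;> simp [hc, h1, h2]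
        · simp [hc, h1]
      rw [Finset.sum_congr rfl fun i _ => hterm i, Finset.sum_sub_distrib,
        Finset.sum_boole, ← Finset.sum_filter, Finset.sum_const, countIn]
      push_cast
      ring
    have hc0 : ∀ i, ∑ b, q (xs i) b * c i b = 0 := by
      intro i
      by_cases h1 : xs i = x
      · have : ∀ b, q (xs i) b * c i b
            = (if b = k then q x b else 0) - q x b * q x k := by
          intro b
          by_cases h2 : b = k <;> simp [hc, h1, h2] <;> ring_nf <;> rw [h1] <;> try ring
        rw [Finset.sum_congr rfl fun b _ => this b, Finset.sum_sub_distrib,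
          Finset.sum_ite_eq' Finset.univ k (q x), ← Finset.sum_mul]
        rw [h1] at *
        simp [hq1 x]
      · simp [hc, h1]
    have hvnn : 0 ≤ q x k * (1 - q x k) :=
      mul_nonneg (hq0 x k) (sub_nonneg.2 (hqle1 x k))
    have hvar : ∑ i, ∑ b, q (xs i) b * (c i b) ^ 2
        = (countIn x xs : ℝ) * (q x k * (1 - q x k)) := by
      have hin : ∀ i, ∑ b, q (xs i) b * (c i b) ^ 2
          = if xs i = x then q x k * (1 - q x k) else 0 := by
        intro i
        by_cases h1 : xs i = x
        · rw [if_pos h1]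
          have hterm : ∀ b, q (xs i) b * (c i b) ^ 2
              = (if b = k then q x b else 0) * (1 - 2 * q x k)
                + q x b * q x k ^ 2 := by
            intro b
            by_cases h2 : b = k <;> simp [hc, h1, h2] <;> ring
          rw [Finset.sum_congr rfl fun b _ => hterm b, Finset.sum_add_distrib,
            ← Finset.sum_mul, Finset.sum_ite_eq' Finset.univ k (q x),
            ← Finset.sum_mul, hq1 x]
          simp
          ring
        · simp [hc, h1]
      rw [Finset.sum_congr rfl fun i _ => hin i, ← Finset.sum_filter,
        Finset.sum_const, countIn]
      push_cast
      ring
    set t : ℝ := Real.sqrt (countIn x xs) * Real.sqrt (q x k * (1 - q x k)) with htdef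
    have ht : 0 ≤ t := mul_nonneg (Real.sqrt_nonneg _) (Real.sqrt_nonneg _)
    have ht2 : t ^ 2 = ∑ i, ∑ b, q (xs i) b * (c i b) ^ 2 := by
      rw [hvar, htdef, mul_pow, Real.sq_sqrt (Nat.cast_nonneg _), Real.sq_sqrt hvnn]
    have hcheb := chebyshev_bound (fun i => q (xs i)) c (fun i b => hq0 (xs i) b)
      (fun i => hq1 (xs i)) hc0 t ht ht2 δ hδ
    have hfe : (Finset.univ.filter (fun js : Fin n → Fin d =>
        ¬ |((Finset.univ.filter fun i => xs i = x ∧ js i = k).card : ℝ)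
            - (countIn x xs : ℝ) * q x k|
          ≤ δ * Real.sqrt (countIn x xs) * Real.sqrt (q x k * (1 - q x k))))
        = Finset.univ.filter (fun js : Fin n → Fin d => ¬ |∑ i, c i (js i)| ≤ δ * t) := by
      refine Finset.filter_congr fun js _ => ?_
      rw [hsumc js, htdef, mul_assoc]
    rw [hfe]
    exact hcheb
  -- union bound
  have hsplit : ∑ js ∈ Finset.univ \ S, p js + ∑ js ∈ S, p js = 1 := by
    rw [Finset.sum_sdiff (Finset.subset_univ S), htot]
  have hub : ∑ js ∈ Finset.univ \ S, p js ≤ (Fintype.card X : ℝ) * d / δ ^ 2 := by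
    have step1 : ∀ js ∈ Finset.univ \ S, p js
        ≤ ∑ x : X, ∑ k : Fin d, (if ¬ |((Finset.univ.filter fun i => xs i = x ∧ js i = k).card : ℝ)
            - (countIn x xs : ℝ) * q x k|
          ≤ δ * Real.sqrt (countIn x xs) * Real.sqrt (q x k * (1 - q x k))
          then p js else 0) := by
      intro js hjs
      rw [Finset.mem_sdiff, hS, condTypicalSet, Finset.mem_filter] at hjs
      have hex : ∃ x k, δ * Real.sqrt (countIn x xs) * Real.sqrt (q x k * (1 - q x k))
          < |((Finset.univ.filter fun i => xs i = x ∧ js i = k).card : ℝ)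
          - (countIn x xs : ℝ) * q x k| := by
        have := hjs.2
        push_neg at this
        exact this (Finset.mem_univ js)
      obtain ⟨x₀, k₀, hx₀'⟩ := hex
      have hx₀ : ¬ |((Finset.univ.filter fun i => xs i = x₀ ∧ js i = k₀).card : ℝ)
          - (countIn x₀ xs : ℝ) * q x₀ k₀|
          ≤ δ * Real.sqrt (countIn x₀ xs) * Real.sqrt (q x₀ k₀ * (1 - q x₀ k₀)) :=
        not_le.2 hx₀'
      have hinn : ∀ x : X, (0:ℝ) ≤ ∑ k : Fin d, (if ¬ |((Finset.univ.filter fun i => xs i = x ∧ js i = k).card : ℝ)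
            - (countIn x xs : ℝ) * q x k|
          ≤ δ * Real.sqrt (countIn x xs) * Real.sqrt (q x k * (1 - q x k))
          then p js else 0) := by
        intro x
        refine Finset.sum_nonneg fun k _ => ?_
        split <;> [exact hpnn js; rfl]
      calc p js = (if ¬ |((Finset.univ.filter fun i => xs i = x₀ ∧ js i = k₀).card : ℝ)
            - (countIn x₀ xs : ℝ) * q x₀ k₀|
          ≤ δ * Real.sqrt (countIn x₀ xs) * Real.sqrt (q x₀ k₀ * (1 - q x₀ k₀))
          then p js else 0) := by rw [if_pos hx₀]
        _ ≤ ∑ k : Fin d, (if ¬ |((Finset.univ.filter fun i => xs i = x₀ ∧ js i = k).card : ℝ)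
            - (countIn x₀ xs : ℝ) * q x₀ k|
          ≤ δ * Real.sqrt (countIn x₀ xs) * Real.sqrt (q x₀ k * (1 - q x₀ k))
          then p js else 0) := by
            refine Finset.single_le_sum (f := fun k : Fin d =>
              (if ¬ |((Finset.univ.filter fun i => xs i = x₀ ∧ js i = k).card : ℝ)
                - (countIn x₀ xs : ℝ) * q x₀ k|
              ≤ δ * Real.sqrt (countIn x₀ xs) * Real.sqrt (q x₀ k * (1 - q x₀ k))
              then p js else 0)) (fun k _ => ?_) (Finset.mem_univ k₀)
            split <;> [exact hpnn js; rfl]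
        _ ≤ _ := Finset.single_le_sum (fun x _ => hinn x) (Finset.mem_univ x₀)
    calc ∑ js ∈ Finset.univ \ S, p js
        ≤ ∑ js ∈ Finset.univ \ S, ∑ x : X, ∑ k : Fin d,
            (if ¬ |((Finset.univ.filter fun i => xs i = x ∧ js i = k).card : ℝ)
              - (countIn x xs : ℝ) * q x k|
            ≤ δ * Real.sqrt (countIn x xs) * Real.sqrt (q x k * (1 - q x k))
            then p js else 0) := Finset.sum_le_sum step1
      _ ≤ ∑ js : Fin n → Fin d, ∑ x : X, ∑ k : Fin d,
            (if ¬ |((Finset.univ.filter fun i => xs i = x ∧ js i = k).card : ℝ)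
              - (countIn x xs : ℝ) * q x k|
            ≤ δ * Real.sqrt (countIn x xs) * Real.sqrt (q x k * (1 - q x k))
            then p js else 0) := by
          refine Finset.sum_le_sum_of_subset_of_nonneg (Finset.sdiff_subset) fun js _ _ => ?_
          refine Finset.sum_nonneg fun x _ => Finset.sum_nonneg fun k _ => ?_
          split <;> [exact hpnn js; rfl]
      _ = ∑ x : X, ∑ k : Fin d, ∑ js ∈ Finset.univ.filter (fun js : Fin n → Fin d =>
            ¬ |((Finset.univ.filter fun i => xs i = x ∧ js i = k).card : ℝ)
              - (countIn x xs : ℝ) * q x k|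
            ≤ δ * Real.sqrt (countIn x xs) * Real.sqrt (q x k * (1 - q x k))), p js := by
          rw [Finset.sum_comm]
          refine Finset.sum_congr rfl fun x _ => ?_
          rw [Finset.sum_comm]
          refine Finset.sum_congr rfl fun k _ => ?_
          rw [Finset.sum_filter]
      _ ≤ ∑ x : X, ∑ k : Fin d, 1 / δ ^ 2 :=
          Finset.sum_le_sum fun x _ => Finset.sum_le_sum fun k _ => by
            simpa using key x _ |>.trans le_rfl
      _ = (Fintype.card X : ℝ) * d / δ ^ 2 := by
          simp [Finset.sum_const, Finset.card_univ]
          ring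
  linarith [hsplit, hub, Finset.sum_nonneg fun js (_ : js ∈ Finset.univ \ S) => hpnn js]
end
end

section
/- Let W be a classical–quantum channel from a finite alphabet X with |X| = a into the density operators on ℂ^d. For every x^n ∈ X^n of type P and every δ ≥ 0, writing Π^n = Π^n_{W,δ}(x^n), one has Π^n·exp₂(−nH(W|P) − K·d·√a·δ·√n) ≤ Π^n W_{x^n} Π^n ≤ Π^n·exp₂(−nH(W|P) + K·d·√a·δ·√n) in the positive semidefinite order; moreover Tr Π^n ≤ exp₂(nH(W|P) + K·d·√a·δ·√n) and, for δ > 0, Tr Π^n ≥ (1 − ad/δ²)·exp₂(nH(W|P) − K·d·√a·δ·√n), where K = 2 log₂(e)/e and H(W|P) = Σ_x P(x)H(W_x). -/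
open Matrix BigOperators Finset
open scoped Classical ComplexOrder

noncomputable section

section TensorAux

variable {d n : ℕ}

lemma tensorPow_mul (A B : Fin n → Mat d) :
    tensorPow A * tensorPow B = tensorPow (fun i => A i * B i) := by
  ext j k
  simp only [tensorPow, Matrix.mul_apply, Matrix.of_apply]
  rw [Fintype.prod_sum (fun i m => A i (j i) m * B i m (k i))]
  exact Finset.sum_congr rfl fun l _ => (Finset.prod_mul_distrib).symm

lemma tensorPow_conjTranspose (A : Fin n → Mat d) :
    (tensorPow A)ᴴ = tensorPow (fun i => (A i)ᴴ) := by
  ext j k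
  simp only [tensorPow, Matrix.conjTranspose_apply, Matrix.of_apply]
  exact map_prod (starRingEnd ℂ) _ _

lemma tensorPow_trace (A : Fin n → Mat d) :
    (tensorPow A).trace = ∏ i, (A i).trace := by
  simp only [Matrix.trace, Matrix.diag, tensorPow, Matrix.of_apply]
  rw [Fintype.prod_sum (fun i m => A i m m)]

lemma tensorPow_eq_zero {A : Fin n → Mat d} {i₀ : Fin n} (h : A i₀ = 0) :
    tensorPow A = 0 := by
  ext j k
  simp only [tensorPow, Matrix.of_apply, Matrix.zero_apply]
  exact Finset.prod_eq_zero (Finset.mem_univ i₀) (by simp [h])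

end TensorAux
section ProbAux

variable {d n : ℕ}

lemma sum_prod_dist {r : Fin n → Fin d → ℝ} (h1 : ∀ i, ∑ j, r i j = 1) :
    ∑ js : Fin n → Fin d, ∏ i, r i (js i) = 1 := by
  rw [← Fintype.prod_sum r]
  simp [h1]

lemma expect_indicator {r : Fin n → Fin d → ℝ}
    (h1 : ∀ i, ∑ j, r i j = 1) (S : Finset (Fin n)) (k : Fin d) :
    ∑ js : Fin n → Fin d, (∏ i, r i (js i)) * (∏ i ∈ S, if js i = k then (1:ℝ) else 0)
      = ∏ i ∈ S, r i k := by
  have key : ∀ js : Fin n → Fin d,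
      (∏ i, r i (js i)) * (∏ i ∈ S, if js i = k then (1:ℝ) else 0)
        = ∏ i, (r i (js i) * if i ∈ S then (if js i = k then (1:ℝ) else 0) else 1) := by
    intro js
    rw [Finset.prod_mul_distrib]
    congr 1
    have h2 := Finset.prod_ite_mem Finset.univ S (fun i => if js i = k then (1:ℝ) else 0)
    rw [Finset.univ_inter] at h2
    rw [← h2]
  simp_rw [key]
  rw [← Fintype.prod_sum (fun i j => r i j * if i ∈ S then (if j = k then (1:ℝ) else 0) else 1)]
  have h3 := Finset.prod_ite_mem Finset.univ S (fun i => r i k)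
  rw [Finset.univ_inter] at h3
  rw [← h3]
  refine Finset.prod_congr rfl fun i _ => ?_
  by_cases h : i ∈ S <;> simp [h, h1 i, mul_ite, mul_one, mul_zero]

lemma expect_chi {r : Fin n → Fin d → ℝ}
    (h1 : ∀ i, ∑ j, r i j = 1) (i : Fin n) (k : Fin d) :
    ∑ js : Fin n → Fin d, (∏ i', r i' (js i')) * (if js i = k then (1:ℝ) else 0)
      = r i k := by
  have := expect_indicator h1 {i} k
  simpa using this

lemma expect_chi2 {r : Fin n → Fin d → ℝ}
    (h1 : ∀ i, ∑ j, r i j = 1) {i i' : Fin n} (hne : i ≠ i') (k : Fin d) :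
    ∑ js : Fin n → Fin d, (∏ i'', r i'' (js i'')) *
        ((if js i = k then (1:ℝ) else 0) * (if js i' = k then (1:ℝ) else 0))
      = r i k * r i' k := by
  have := expect_indicator h1 {i, i'} k
  simp only [Finset.prod_pair hne] at this
  exact this

lemma expect_sq {r : Fin n → Fin d → ℝ} (h1 : ∀ i, ∑ j, r i j = 1)
    (I : Finset (Fin n)) (k : Fin d) {qv : ℝ} (hqv : ∀ i ∈ I, r i k = qv) :
    ∑ js : Fin n → Fin d, (∏ i, r i (js i)) *
        ((∑ i ∈ I, if js i = k then (1:ℝ) else 0) - I.card * qv)^2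
      = I.card * qv * (1 - qv) := by
  have EN : ∑ js : Fin n → Fin d, (∏ i, r i (js i)) *
      (∑ i ∈ I, if js i = k then (1:ℝ) else 0) = I.card * qv := by
    simp_rw [Finset.mul_sum]
    rw [Finset.sum_comm]
    rw [Finset.sum_congr rfl fun i hi => (expect_chi h1 i k).trans (hqv i hi)]
    simp [mul_comm]
  have EN2 : ∑ js : Fin n → Fin d, (∏ i, r i (js i)) *
      (∑ i ∈ I, if js i = k then (1:ℝ) else 0)^2
      = (I.card:ℝ)^2 * qv^2 + I.card * (qv - qv^2) := by
    have expand : ∀ js : Fin n → Fin d, (∏ i, r i (js i)) *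
        (∑ i ∈ I, if js i = k then (1:ℝ) else 0)^2
        = ∑ i ∈ I, ∑ i' ∈ I, (∏ i'', r i'' (js i'')) *
            ((if js i = k then (1:ℝ) else 0) * (if js i' = k then (1:ℝ) else 0)) := by
      intro js
      rw [sq, Finset.sum_mul_sum]
      simp_rw [Finset.mul_sum]
    simp_rw [expand]
    rw [Finset.sum_comm]
    have inner : ∀ i ∈ I, ∑ js : Fin n → Fin d, ∑ i' ∈ I, (∏ i'', r i'' (js i'')) *
        ((if js i = k then (1:ℝ) else 0) * (if js i' = k then (1:ℝ) else 0))
        = I.card * qv^2 + (qv - qv^2) := by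
      intro i hi
      rw [Finset.sum_comm]
      have pt : ∀ i' ∈ I, ∑ js : Fin n → Fin d, (∏ i'', r i'' (js i'')) *
          ((if js i = k then (1:ℝ) else 0) * (if js i' = k then (1:ℝ) else 0))
          = qv^2 + (if i' = i then qv - qv^2 else 0) := by
        intro i' hi'
        by_cases h : i' = i
        · subst h
          have hsq : ∀ js : Fin n → Fin d,
              (if js i' = k then (1:ℝ) else 0) * (if js i' = k then (1:ℝ) else 0)
              = (if js i' = k then (1:ℝ) else 0) := by
            intro js; by_cases h : js i' = k <;> simp [h]
          simp_rw [hsq]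
          rw [(expect_chi h1 i' k).trans (hqv i' hi')]
          simp only [if_true, eq_self_iff_true]
          ring
        · rw [(expect_chi2 h1 (fun he => h (he.symm)) k)]
          rw [hqv i hi, hqv i' hi']
          simp [h, sq]
      rw [Finset.sum_congr rfl pt, Finset.sum_add_distrib, Finset.sum_const,
        Finset.sum_ite_eq' I i (fun _ => qv - qv^2)]
      simp [hi, mul_comm]
    rw [Finset.sum_congr rfl inner, Finset.sum_const, nsmul_eq_mul]
    ring
  have E1 : ∑ js : Fin n → Fin d, (∏ i, r i (js i)) = 1 := sum_prod_dist h1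
  have expand2 : ∀ js : Fin n → Fin d, (∏ i, r i (js i)) *
      ((∑ i ∈ I, if js i = k then (1:ℝ) else 0) - I.card * qv)^2
      = (∏ i, r i (js i)) * (∑ i ∈ I, if js i = k then (1:ℝ) else 0)^2
        - (2 * (I.card * qv)) * ((∏ i, r i (js i)) *
            (∑ i ∈ I, if js i = k then (1:ℝ) else 0))
        + ((I.card:ℝ) * qv)^2 * (∏ i, r i (js i)) := by
    intro js; ring
  simp_rw [expand2]
  rw [Finset.sum_add_distrib, Finset.sum_sub_distrib, ← Finset.mul_sum, ← Finset.mul_sum,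
    EN, EN2, E1]
  ring

end ProbAux
section ChebAux

variable {d n : ℕ}

lemma cheb {r : Fin n → Fin d → ℝ} (h0 : ∀ i j, 0 ≤ r i j) (h1 : ∀ i, ∑ j, r i j = 1)
    (I : Finset (Fin n)) (k : Fin d) {qv δ : ℝ} (hqv : ∀ i ∈ I, r i k = qv)
    (hq0 : 0 ≤ qv) (hq1 : qv ≤ 1) (hδ : 0 < δ) :
    ∑ js ∈ Finset.univ.filter (fun js : Fin n → Fin d =>
        ¬ |(∑ i ∈ I, if js i = k then (1:ℝ) else 0) - I.card * qv|
          ≤ δ * Real.sqrt I.card * Real.sqrt (qv * (1 - qv))),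
      (∏ i, r i (js i)) ≤ 1 / δ^2 := by
  set N : (Fin n → Fin d) → ℝ := fun js => ∑ i ∈ I, if js i = k then (1:ℝ) else 0 with hN
  set p : (Fin n → Fin d) → ℝ := fun js => ∏ i, r i (js i) with hp
  set B : Finset (Fin n → Fin d) := Finset.univ.filter (fun js =>
      ¬ |N js - I.card * qv| ≤ δ * Real.sqrt I.card * Real.sqrt (qv * (1 - qv))) with hB
  have hpnn : ∀ js, 0 ≤ p js := fun js => Finset.prod_nonneg fun i _ => h0 i (js i)
  set V : ℝ := I.card * qv * (1 - qv) with hV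
  have hVnn : 0 ≤ V := by
    have : (0:ℝ) ≤ I.card := Nat.cast_nonneg _
    have h2 : 0 ≤ 1 - qv := by linarith
    positivity
  have ht2 : (δ * Real.sqrt I.card * Real.sqrt (qv * (1 - qv)))^2 = δ^2 * V := by
    rw [mul_pow, mul_pow, Real.sq_sqrt (Nat.cast_nonneg _),
      Real.sq_sqrt (by nlinarith : (0:ℝ) ≤ qv * (1 - qv))]
    ring
  have key : ∑ js ∈ B, p js * (N js - I.card * qv)^2 ≤ V := by
    rw [hV, ← expect_sq h1 I k hqv]
    exact Finset.sum_le_sum_of_subset_of_nonneg (Finset.filter_subset _ _)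
      (fun js _ _ => mul_nonneg (hpnn js) (sq_nonneg _))
  have lb : ∀ js ∈ B, δ^2 * V ≤ (N js - I.card * qv)^2 := by
    intro js hjs
    have h := (Finset.mem_filter.mp hjs).2
    push_neg at h
    have habs : δ * Real.sqrt I.card * Real.sqrt (qv * (1 - qv)) ≤ |N js - I.card * qv| := le_of_lt h
    have hnn : 0 ≤ δ * Real.sqrt I.card * Real.sqrt (qv * (1 - qv)) :=
      mul_nonneg (mul_nonneg hδ.le (Real.sqrt_nonneg _)) (Real.sqrt_nonneg _)
    calc δ^2 * V = (δ * Real.sqrt I.card * Real.sqrt (qv * (1 - qv)))^2 := ht2.symm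
      _ ≤ |N js - I.card * qv|^2 := by
          exact pow_le_pow_left₀ hnn habs 2
      _ = (N js - I.card * qv)^2 := sq_abs _
  by_cases hV0 : V = 0
  · have allz : ∀ js ∈ B, p js = 0 := by
      intro js hjs
      have h2 : 0 < (N js - I.card * qv)^2 := by
        have hmem := (Finset.mem_filter.mp hjs).2
        push_neg at hmem
        have hnn : 0 ≤ δ * Real.sqrt I.card * Real.sqrt (qv * (1 - qv)) := by positivity
        have habs : 0 < |N js - I.card * qv| := lt_of_le_of_lt hnn hmem
        have := pow_pos habs 2
        rwa [sq_abs] at this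
      have hsum0 : ∑ js ∈ B, p js * (N js - I.card * qv)^2 ≤ 0 := by
        rw [hV0] at key; exact key
      have := (Finset.sum_eq_zero_iff_of_nonneg
        (fun js _ => mul_nonneg (hpnn js) (sq_nonneg _))).mp
        (le_antisymm hsum0 (Finset.sum_nonneg fun js _ => mul_nonneg (hpnn js) (sq_nonneg _)))
      have h3 := this js hjs
      rcases mul_eq_zero.mp h3 with h | h
      · exact h
      · exact absurd h (ne_of_gt h2)
    rw [Finset.sum_eq_zero allz]
    positivity
  · have hVpos : 0 < V := lt_of_le_of_ne hVnn (Ne.symm hV0)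
    have step : δ^2 * V * ∑ js ∈ B, p js ≤ V := by
      calc δ^2 * V * ∑ js ∈ B, p js = ∑ js ∈ B, p js * (δ^2 * V) := by
            rw [← Finset.sum_mul]; ring
        _ ≤ ∑ js ∈ B, p js * (N js - I.card * qv)^2 :=
            Finset.sum_le_sum fun js hjs => mul_le_mul_of_nonneg_left (lb js hjs) (hpnn js)
        _ ≤ V := key
    have hmul : ((∑ js ∈ B, p js) * δ^2) * V ≤ 1 * V := by
      calc ((∑ js ∈ B, p js) * δ^2) * V = δ^2 * V * ∑ js ∈ B, p js := by ring
        _ ≤ V := step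
        _ = 1 * V := by ring
    have h4 : (∑ js ∈ B, p js) * δ^2 ≤ 1 := le_of_mul_le_mul_right hmul hVpos
    exact (le_div_iff₀ (by positivity)).mpr h4
end ChebAux
section UnionAux

lemma typical_mass {X : Type} [Fintype X] {d n : ℕ} (xs : Fin n → X)
    (q : X → Fin d → ℝ) (hq : ∀ x, IsProbDist (q x)) {δ : ℝ} (hδ : 0 < δ) :
    1 - (Fintype.card X) * d / δ^2 ≤
      ∑ js ∈ condTypicalSet xs q δ, ∏ i, q (xs i) (js i) := by
  classical
  set p : (Fin n → Fin d) → ℝ := fun js => ∏ i, q (xs i) (js i) with hp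
  have hpnn : ∀ js, 0 ≤ p js := fun js => Finset.prod_nonneg fun i _ => (hq (xs i)).1 _
  have hsum1 : ∑ js : Fin n → Fin d, p js = 1 :=
    sum_prod_dist (fun i => (hq (xs i)).2)
  -- the condition for a pair (x, k)
  set cond : X → Fin d → (Fin n → Fin d) → Prop := fun x k js =>
    |((Finset.univ.filter fun i => xs i = x ∧ js i = k).card : ℝ)
        - (countIn x xs : ℝ) * q x k|
      ≤ δ * Real.sqrt (countIn x xs) * Real.sqrt (q x k * (1 - q x k)) with hcond
  have hbad : ∀ (x : X) (k : Fin d),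
      ∑ js ∈ Finset.univ.filter (fun js => ¬ cond x k js), p js ≤ 1 / δ^2 := by
    intro x k
    have hI : ∀ js : Fin n → Fin d,
        ((Finset.univ.filter fun i => xs i = x ∧ js i = k).card : ℝ)
          = ∑ i ∈ Finset.univ.filter (fun i => xs i = x), if js i = k then (1:ℝ) else 0 := by
      intro js
      rw [Finset.sum_boole, Finset.filter_filter]
    have hcard : (countIn x xs : ℝ) = ((Finset.univ.filter fun i => xs i = x).card : ℝ) := rfl
    have := cheb (r := fun i => q (xs i)) (fun i j => (hq (xs i)).1 j)
      (fun i => (hq (xs i)).2) (Finset.univ.filter fun i => xs i = x) k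
      (qv := q x k)
      (fun i hi => by
        have hxi : xs i = x := (Finset.mem_filter.mp hi).2
        simp only [hxi])
      ((hq x).1 k) ?ub hδ
    · refine le_trans (le_of_eq ?_) this
      apply Finset.sum_congr
      · apply Finset.filter_congr
        intro js _
        rw [hcond]
        simp only [hI js, hcard]
      · intro js _; rfl
    · -- q x k ≤ 1
      have := Finset.single_le_sum (f := q x) (fun j _ => (hq x).1 j) (Finset.mem_univ k)
      rw [(hq x).2] at this
      exact this
  -- indicator bound
  have hind : ∀ js, js ∉ condTypicalSet xs q δ →
      (1:ℝ) ≤ ∑ x : X, ∑ k : Fin d, (if ¬ cond x k js then (1:ℝ) else 0) := by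
    intro js hjs
    rw [condTypicalSet, Finset.mem_filter] at hjs
    push_neg at hjs
    obtain ⟨x, k, hxk⟩ := hjs (Finset.mem_univ js)
    calc (1:ℝ) = ∑ x' : X, if x' = x then (1:ℝ) else 0 := by simp
      _ ≤ ∑ x' : X, ∑ k' : Fin d, (if ¬ cond x' k' js then (1:ℝ) else 0) := by
          apply Finset.sum_le_sum
          intro x' _
          by_cases hx : x' = x
          · subst hx
            simp only [if_pos rfl]
            calc (1:ℝ) = ∑ k' : Fin d, if k' = k then (1:ℝ) else 0 := by simp
              _ ≤ _ := by
                  apply Finset.sum_le_sum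
                  intro k' _
                  by_cases hk : k' = k
                  · subst hk
                    simp [hcond, hxk]
                  · rw [if_neg hk]
                    positivity
          · rw [if_neg hx]
            positivity
  have step1 : ∑ js ∈ Finset.univ \ condTypicalSet xs q δ, p js
      ≤ (Fintype.card X) * d / δ^2 := by
    calc ∑ js ∈ Finset.univ \ condTypicalSet xs q δ, p js
        ≤ ∑ js ∈ Finset.univ \ condTypicalSet xs q δ,
            p js * ∑ x : X, ∑ k : Fin d, (if ¬ cond x k js then (1:ℝ) else 0) := by
          apply Finset.sum_le_sum
          intro js hjs
          have hnot := (Finset.mem_sdiff.mp hjs).2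
          have := hind js hnot
          nlinarith [hpnn js]
      _ ≤ ∑ js : Fin n → Fin d,
            p js * ∑ x : X, ∑ k : Fin d, (if ¬ cond x k js then (1:ℝ) else 0) := by
          apply Finset.sum_le_sum_of_subset_of_nonneg (Finset.sdiff_subset)
          intro js _ _
          apply mul_nonneg (hpnn js)
          apply Finset.sum_nonneg; intro x _
          apply Finset.sum_nonneg; intro k _
          positivity
      _ = ∑ x : X, ∑ k : Fin d, ∑ js : Fin n → Fin d,
            p js * (if ¬ cond x k js then (1:ℝ) else 0) := by
          simp_rw [Finset.mul_sum]
          rw [Finset.sum_comm]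
          apply Finset.sum_congr rfl
          intro x _
          rw [Finset.sum_comm]
      _ ≤ ∑ x : X, ∑ k : Fin d, 1 / δ^2 := by
          apply Finset.sum_le_sum; intro x _
          apply Finset.sum_le_sum; intro k _
          have : ∑ js : Fin n → Fin d, p js * (if ¬ cond x k js then (1:ℝ) else 0)
              = ∑ js ∈ Finset.univ.filter (fun js => ¬ cond x k js), p js := by
            rw [Finset.sum_filter]
            apply Finset.sum_congr rfl
            intro js _
            by_cases h : cond x k js <;> simp [h]
          rw [this]
          exact hbad x k
      _ = (Fintype.card X) * d / δ^2 := by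
          simp [Finset.sum_const, Finset.card_univ]
          ring
  have split : ∑ js ∈ condTypicalSet xs q δ, p js
      = 1 - ∑ js ∈ Finset.univ \ condTypicalSet xs q δ, p js := by
    rw [eq_sub_iff_add_eq, ← Finset.sum_union (Finset.disjoint_sdiff)]
    rw [Finset.union_sdiff_of_subset (Finset.subset_univ _)]
    exact hsum1
  rw [split]
  linarith [step1]

end UnionAux

section AnalyticAux

lemma sum_sqrt_le_sqrt_card {X : Type} [Fintype X] (f : X → ℝ) (hf : ∀ x, 0 ≤ f x) :
    ∑ x, Real.sqrt (f x) ≤ Real.sqrt (Fintype.card X) * Real.sqrt (∑ x, f x) := by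
  have h1 : (∑ x, Real.sqrt (f x))^2 ≤ (Fintype.card X) * ∑ x, f x := by
    have := sq_sum_le_card_mul_sum_sq (s := Finset.univ) (f := fun x => Real.sqrt (f x))
    simpa [Real.sq_sqrt (hf _), Finset.card_univ] using this
  have h2 : ∑ x, Real.sqrt (f x) = Real.sqrt ((∑ x, Real.sqrt (f x))^2) := by
    rw [Real.sqrt_sq (Finset.sum_nonneg fun x _ => Real.sqrt_nonneg _)]
  rw [h2, ← Real.sqrt_mul (Nat.cast_nonneg _)]
  exact Real.sqrt_le_sqrt h1

lemma Kconst_nonneg : 0 ≤ Kconst := by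
  rw [Kconst, Real.logb, Real.log_exp]
  positivity

lemma sqrt_mul_abs_logb_le {t : ℝ} (h0 : 0 ≤ t) (h1 : t ≤ 1) :
    Real.sqrt (t * (1 - t)) * |Real.logb 2 t| ≤ Kconst := by
  rcases eq_or_lt_of_le h0 with h | hpos
  · rw [← h]
    simpa [Real.logb] using Kconst_nonneg
  have hlogle : Real.log t ≤ 0 := Real.log_nonpos h0 h1
  have habs : |Real.logb 2 t| = -(Real.log t) / Real.log 2 := by
    rw [Real.logb, abs_div, abs_of_nonpos hlogle, abs_of_pos (Real.log_pos one_lt_two)]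
  -- key : sqrt t * (-(log t)) ≤ 2 / e
  have hs : 0 < Real.sqrt t := Real.sqrt_pos.mpr hpos
  have key : Real.sqrt t * (-(Real.log t)) ≤ 2 / Real.exp 1 := by
    have hlog : Real.log t = 2 * Real.log (Real.sqrt t) := by
      rw [Real.log_sqrt h0]; ring
    have hx : (0:ℝ) < 1 / (Real.sqrt t * Real.exp 1) := by positivity
    have hb := Real.log_le_sub_one_of_pos hx
    have hexp : Real.log (1 / (Real.sqrt t * Real.exp 1))
        = -(Real.log (Real.sqrt t)) - 1 := by
      rw [one_div, Real.log_inv, Real.log_mul (ne_of_gt hs) (Real.exp_ne_zero 1),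
        Real.log_exp]
      ring
    rw [hexp] at hb
    -- hb : -(log √t) - 1 ≤ 1/(√t e) - 1
    have h5 : -(Real.log (Real.sqrt t)) ≤ 1 / (Real.sqrt t * Real.exp 1) := by linarith
    have h6 : Real.sqrt t * (-(Real.log (Real.sqrt t))) ≤ 1 / Real.exp 1 := by
      have := mul_le_mul_of_nonneg_left h5 hs.le
      calc Real.sqrt t * (-(Real.log (Real.sqrt t)))
          ≤ Real.sqrt t * (1 / (Real.sqrt t * Real.exp 1)) := this
        _ = 1 / Real.exp 1 := by field_simp
    rw [hlog]
    calc Real.sqrt t * (-(2 * Real.log (Real.sqrt t)))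
        = 2 * (Real.sqrt t * (-(Real.log (Real.sqrt t)))) := by ring
      _ ≤ 2 * (1 / Real.exp 1) := by linarith
      _ = 2 / Real.exp 1 := by ring
  have hsqle : Real.sqrt (t * (1 - t)) ≤ Real.sqrt t := by
    apply Real.sqrt_le_sqrt; nlinarith
  have hKval : Kconst = (2 / Real.exp 1) / Real.log 2 := by
    rw [Kconst, Real.logb, Real.log_exp]; ring
  rw [habs, hKval]
  have hlog2 : 0 < Real.log 2 := Real.log_pos one_lt_two
  rw [div_eq_mul_inv, div_eq_mul_inv]
  have hmono : Real.sqrt (t * (1 - t)) * (-(Real.log t)) ≤ 2 / Real.exp 1 := by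
    calc Real.sqrt (t * (1 - t)) * (-(Real.log t))
        ≤ Real.sqrt t * (-(Real.log t)) := by
          apply mul_le_mul_of_nonneg_right hsqle (by linarith)
      _ ≤ 2 / Real.exp 1 := key
  calc Real.sqrt (t * (1 - t)) * (-(Real.log t) * (Real.log 2)⁻¹)
      = (Real.sqrt (t * (1 - t)) * (-(Real.log t))) * (Real.log 2)⁻¹ := by ring
    _ ≤ (2 / Real.exp 1) * (Real.log 2)⁻¹ := by
        apply mul_le_mul_of_nonneg_right hmono
        positivity

end AnalyticAux
section EntropyAux
set_option maxHeartbeats 1000000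

lemma row_norm_one {d : ℕ} {S : Mat d} (h2 : S * Sᴴ = 1) (j : Fin d) :
    ∑ k, Complex.normSq (S j k) = 1 := by
  have h := congrFun (congrFun h2 j) j
  simp only [Matrix.mul_apply, Matrix.conjTranspose_apply, Matrix.one_apply_eq] at h
  have h3 : ∀ k, S j k * star (S j k) = ((Complex.normSq (S j k) : ℝ) : ℂ) := by
    intro k; rw [Complex.star_def, Complex.mul_conj]
  rw [Finset.sum_congr rfl (fun k _ => h3 k)] at h
  exact_mod_cast h

lemma col_norm_one {d : ℕ} {S : Mat d} (h1 : Sᴴ * S = 1) (k : Fin d) :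
    ∑ j, Complex.normSq (S j k) = 1 := by
  have h := congrFun (congrFun h1 k) k
  simp only [Matrix.mul_apply, Matrix.conjTranspose_apply, Matrix.one_apply_eq] at h
  have h3 : ∀ j, star (S j k) * S j k = ((Complex.normSq (S j k) : ℝ) : ℂ) := by
    intro j; rw [Complex.star_def, mul_comm, Complex.mul_conj]
  rw [Finset.sum_congr rfl (fun j _ => h3 j)] at h
  exact_mod_cast h

lemma sum_fun_eigen {d : ℕ} {S : Mat d} (h1 : Sᴴ * S = 1) (h2 : S * Sᴴ = 1)
    {lam mu : Fin d → ℝ} (hrel : ∀ j k, S j k ≠ 0 → lam j = mu k) (g : ℝ → ℝ) :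
    ∑ j, g (lam j) = ∑ k, g (mu k) := by
  calc ∑ j, g (lam j) = ∑ j, ∑ k, Complex.normSq (S j k) * g (lam j) := by
        refine Finset.sum_congr rfl fun j _ => ?_
        rw [← Finset.sum_mul, row_norm_one h2 j, one_mul]
    _ = ∑ j, ∑ k, Complex.normSq (S j k) * g (mu k) := by
        refine Finset.sum_congr rfl fun j _ => Finset.sum_congr rfl fun k _ => ?_
        by_cases h : S j k = 0
        · simp [h]
        · rw [hrel j k h]
    _ = ∑ k, ∑ j, Complex.normSq (S j k) * g (mu k) := Finset.sum_comm
    _ = ∑ k, g (mu k) := by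
        refine Finset.sum_congr rfl fun k _ => ?_
        rw [← Finset.sum_mul, col_norm_one h1 k, one_mul]

lemma exists_unitary_diag {d : ℕ} {ρ : Mat d} {R : Fin d → ℝ} {π : Fin d → Mat d}
    (hd : IsDiagonalization ρ R π) :
    ∃ U : Mat d, Uᴴ * U = 1 ∧ U * Uᴴ = 1 ∧
      Uᴴ * ρ * U = Matrix.diagonal (fun j => (R j : ℂ)) := by
  classical
  obtain ⟨hpsd, hidem, htr, horth, hsum, hρ, hprob⟩ := hd
  have hvec : ∀ j : Fin d, ∃ v : Fin d → ℂ,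
      π j *ᵥ v = v ∧ ∑ a, Complex.normSq (v a) = 1 := by
    intro j
    have hne : π j ≠ 0 := by
      intro h
      have h' := htr j
      rw [h] at h'
      simp at h'
    have hex : ∃ a b, π j a b ≠ 0 := by
      by_contra h
      push_neg at h
      exact hne (by ext a b; exact h a b)
    obtain ⟨a₀, b₀, hab⟩ := hex
    set w : Fin d → ℂ := fun a => π j a b₀ with hw
    have hfix : π j *ᵥ w = w := by
      ext a
      have h := congrFun (congrFun (hidem j) a) b₀
      simp only [Matrix.mul_apply] at h
      simpa [Matrix.mulVec, dotProduct, hw] using h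
    have hwne : Complex.normSq (w a₀) ≠ 0 := by
      simp only [hw]
      exact fun h => hab (Complex.normSq_eq_zero.mp h)
    have hsumpos : 0 < ∑ a, Complex.normSq (w a) := by
      have h1 : 0 ≤ ∑ a, Complex.normSq (w a) :=
        Finset.sum_nonneg fun a _ => Complex.normSq_nonneg _
      rcases lt_or_eq_of_le h1 with h | h
      · exact h
      · exfalso
        have h' := (Finset.sum_eq_zero_iff_of_nonneg
          (fun a _ => Complex.normSq_nonneg (w a))).mp h.symm
        exact hwne (h' a₀ (Finset.mem_univ _))
    set c : ℝ := Real.sqrt (∑ a, Complex.normSq (w a)) with hc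
    have hcpos : 0 < c := Real.sqrt_pos.mpr hsumpos
    refine ⟨fun a => ((c⁻¹ : ℝ) : ℂ) * w a, ?_, ?_⟩
    · ext a
      have h := congrFun hfix a
      simp only [Matrix.mulVec, dotProduct] at h ⊢
      calc ∑ b, π j a b * (((c⁻¹ : ℝ) : ℂ) * w b)
          = ((c⁻¹ : ℝ) : ℂ) * ∑ b, π j a b * w b := by
            rw [Finset.mul_sum]; exact Finset.sum_congr rfl fun b _ => by ring
        _ = ((c⁻¹ : ℝ) : ℂ) * w a := by rw [h]
    · have hpt : ∀ a, Complex.normSq (((c⁻¹ : ℝ) : ℂ) * w a)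
          = c⁻¹^2 * Complex.normSq (w a) := by
        intro a
        rw [Complex.normSq_mul, Complex.normSq_ofReal]
        ring
      rw [Finset.sum_congr rfl fun a _ => hpt a, ← Finset.mul_sum, inv_pow]
      have hc2 : c ^ 2 = ∑ a, Complex.normSq (w a) := Real.sq_sqrt hsumpos.le
      rw [hc2]
      exact inv_mul_cancel₀ (ne_of_gt hsumpos)
  choose v hfix hnorm using hvec
  have hzero : ∀ j k, j ≠ k → π j *ᵥ v k = 0 := by
    intro j k hjk
    rw [← hfix k, Matrix.mulVec_mulVec, horth j k hjk, Matrix.zero_mulVec]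
  have horthv : ∀ j k, j ≠ k → ∑ a, star (v j a) * v k a = 0 := by
    intro j k hjk
    calc ∑ a, star (v j a) * v k a = star (v j) ⬝ᵥ v k := rfl
      _ = star (v j) ⬝ᵥ (π k *ᵥ v k) := by rw [hfix k]
      _ = (star (v j) ᵥ* π k) ⬝ᵥ v k := Matrix.dotProduct_mulVec (star (v j)) (π k) (v k)
      _ = star (π k *ᵥ v j) ⬝ᵥ v k := by
          rw [Matrix.star_mulVec, (hpsd k).1]
      _ = 0 := by
          rw [hzero k j (Ne.symm hjk)]
          simp [dotProduct]
  have hnormv : ∀ j, ∑ a, star (v j a) * v j a = 1 := by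
    intro j
    have hpt : ∀ a, star (v j a) * v j a = ((Complex.normSq (v j a) : ℝ) : ℂ) := by
      intro a; rw [Complex.star_def, mul_comm, Complex.mul_conj]
    rw [Finset.sum_congr rfl fun a _ => hpt a, ← Complex.ofReal_sum, hnorm j]
    simp
  have heig : ∀ k, ρ *ᵥ v k = (R k : ℂ) • v k := by
    intro k
    have hsplit : (∑ l, (R l : ℂ) • π l) *ᵥ v k = ∑ l, ((R l : ℂ) • π l) *ᵥ v k := by
      ext a
      simp only [Matrix.mulVec, dotProduct, Matrix.sum_apply, Finset.sum_apply,
        Finset.sum_mul]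
      rw [Finset.sum_comm]
    rw [hρ, hsplit]
    have hpt : ∀ l, ((R l : ℂ) • π l) *ᵥ v k = if l = k then (R k : ℂ) • v k else 0 := by
      intro l
      rw [Matrix.smul_mulVec]
      rcases eq_or_ne l k with h | h
      · subst h; rw [hfix l, if_pos rfl]
      · rw [hzero l k h, smul_zero, if_neg h]
    rw [Finset.sum_congr rfl fun l _ => hpt l,
      Finset.sum_ite_eq' Finset.univ k (fun _ => (R k : ℂ) • v k)]
    simp
  set U : Mat d := Matrix.of (fun a j => v j a) with hU
  have hUU : Uᴴ * U = 1 := by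
    ext j k
    simp only [Matrix.mul_apply, Matrix.conjTranspose_apply, hU, Matrix.of_apply,
      Matrix.one_apply]
    rcases eq_or_ne j k with h | h
    · subst h; rw [if_pos rfl]; exact hnormv j
    · rw [if_neg h]; exact horthv j k h
  refine ⟨U, hUU, mul_eq_one_comm.mp hUU, ?_⟩
  ext j k
  have hcol : ∀ a, ∑ b, ρ a b * v k b = (R k : ℂ) * v k a := by
    intro a
    have h := congrFun (heig k) a
    simpa [Matrix.mulVec, dotProduct] using h
  rw [mul_assoc]
  simp only [Matrix.mul_apply, Matrix.conjTranspose_apply, hU, Matrix.of_apply]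
  simp only [hcol]
  rw [Matrix.diagonal_apply]
  have hfact : ∑ a, star (v j a) * ((R k : ℂ) * v k a)
      = (R k : ℂ) * ∑ a, star (v j a) * v k a := by
    rw [Finset.mul_sum]; exact Finset.sum_congr rfl fun a _ => by ring
  rw [hfact]
  by_cases h : j = k
  · subst h; rw [if_pos rfl, hnormv j, mul_one]
  · rw [if_neg h, horthv j k h, mul_zero]

lemma vnEntropy_eq_of_diag {d : ℕ} {ρ : Mat d} {R : Fin d → ℝ} {π : Fin d → Mat d}
    (hherm : ρ.IsHermitian) (hd : IsDiagonalization ρ R π) :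
    vnEntropy ρ = -∑ k, R k * Real.logb 2 (R k) := by
  obtain ⟨U, hUU, hUU', hdiag⟩ := exists_unitary_diag hd
  have hV := hherm.spectral_theorem
  set V : Mat d := (Matrix.IsHermitian.eigenvectorUnitary hherm : Mat d) with hVdef
  have hVmem : V * Vᴴ = 1 := by
    have h := (Matrix.IsHermitian.eigenvectorUnitary hherm).2
    rw [Matrix.mem_unitaryGroup_iff] at h
    exact h
  have hVmem' : Vᴴ * V = 1 := mul_eq_one_comm.mp hVmem
  have hVspec : ρ = V * Matrix.diagonal (RCLike.ofReal ∘ hherm.eigenvalues) * Vᴴ := hV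
  set S : Mat d := Vᴴ * U with hS
  have hS1 : Sᴴ * S = 1 := by
    rw [hS, Matrix.conjTranspose_mul, Matrix.conjTranspose_conjTranspose]
    calc Uᴴ * V * (Vᴴ * U) = Uᴴ * (V * Vᴴ) * U := by
          rw [Matrix.mul_assoc, Matrix.mul_assoc, Matrix.mul_assoc]
      _ = Uᴴ * U := by rw [hVmem, Matrix.mul_one]
      _ = 1 := hUU
  have hS2 : S * Sᴴ = 1 := mul_eq_one_comm.mp hS1
  have hrel : Matrix.diagonal (RCLike.ofReal ∘ hherm.eigenvalues) * S
      = S * Matrix.diagonal (fun j => (R j : ℂ)) := by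
    have h1 : Vᴴ * ρ * U = Matrix.diagonal (RCLike.ofReal ∘ hherm.eigenvalues) * S := by
      conv_lhs => rw [hVspec]
      calc Vᴴ * (V * Matrix.diagonal (RCLike.ofReal ∘ hherm.eigenvalues) * Vᴴ) * U
          = (Vᴴ * V) * Matrix.diagonal (RCLike.ofReal ∘ hherm.eigenvalues) * (Vᴴ * U) := by
            simp only [Matrix.mul_assoc]
        _ = Matrix.diagonal (RCLike.ofReal ∘ hherm.eigenvalues) * S := by
            rw [hVmem', Matrix.one_mul, hS]
    have h2 : Vᴴ * ρ * U = S * Matrix.diagonal (fun j => (R j : ℂ)) := by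
      have hmid : ρ = U * (Uᴴ * ρ * U) * Uᴴ := by
        calc ρ = (U * Uᴴ) * ρ * (U * Uᴴ) := by rw [hUU', Matrix.one_mul, Matrix.mul_one]
          _ = U * (Uᴴ * ρ * U) * Uᴴ := by simp only [Matrix.mul_assoc]
      calc Vᴴ * ρ * U = Vᴴ * (U * (Uᴴ * ρ * U) * Uᴴ) * U := by rw [← hmid]
        _ = (Vᴴ * U) * (Uᴴ * ρ * U) * (Uᴴ * U) := by simp only [Matrix.mul_assoc]
        _ = S * Matrix.diagonal (fun j => (R j : ℂ)) := by
            rw [hUU, hdiag, hS, Matrix.mul_one]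
    exact h1.symm.trans h2
  have hentry : ∀ j k, S j k ≠ 0 → hherm.eigenvalues j = R k := by
    intro j k hne
    have h := congrFun (congrFun hrel j) k
    rw [Matrix.diagonal_mul, Matrix.mul_diagonal] at h
    have h' : ((hherm.eigenvalues j : ℂ) - (R k : ℂ)) * S j k = 0 := by
      have : (RCLike.ofReal ∘ hherm.eigenvalues) j = ((hherm.eigenvalues j : ℝ) : ℂ) := rfl
      rw [this] at h
      linear_combination h
    rcases mul_eq_zero.mp h' with h'' | h''
    · have : (hherm.eigenvalues j : ℂ) = (R k : ℂ) := by linear_combination h''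
      exact_mod_cast this
    · exact absurd h'' hne
  have hsum := sum_fun_eigen hS1 hS2 hentry (fun t => t * Real.logb 2 t)
  rw [vnEntropy, dif_pos hherm]
  rw [hsum]

end EntropyAux
section MatrixLayer
set_option maxHeartbeats 1000000

variable {X : Type} [Fintype X] {d n : ℕ}

lemma psd_smul {ι : Type*} [Fintype ι] [DecidableEq ι] {M : Matrix ι ι ℂ}
    (hM : M.PosSemidef) {c : ℝ} (hc : 0 ≤ c) : ((c : ℂ) • M).PosSemidef := by
  constructor
  · rw [Matrix.IsHermitian, Matrix.conjTranspose_smul, hM.1]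
    congr 1
    simp [Complex.star_def, Complex.conj_ofReal]
  · have hc' : (0:ℂ) ≤ (c:ℂ) := by exact_mod_cast Complex.zero_le_real.mpr hc
    exact (hM.smul hc').2

lemma psd_sum {ι κ : Type*} [Fintype ι] [DecidableEq ι] (s : Finset κ)
    (f : κ → Matrix ι ι ℂ) (h : ∀ j ∈ s, (f j).PosSemidef) :
    (∑ j ∈ s, f j).PosSemidef :=
  Finset.sum_induction f Matrix.PosSemidef (fun _ _ ha hb => ha.add hb)
    Matrix.PosSemidef.zero h

/-- abbreviation for the elementary tensor projectors -/
def TP {X : Type} {d n : ℕ} (xs : Fin n → X) (π : X → Fin d → Mat d)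
    (js : Fin n → Fin d) : MatPow d n := tensorPow fun i => π (xs i) (js i)

variable (xs : Fin n → X) (q : X → Fin d → ℝ) (π : X → Fin d → Mat d)

lemma TP_mul_TP
    (hidem : ∀ x j, π x j * π x j = π x j)
    (horth : ∀ x j k, j ≠ k → π x j * π x k = 0)
    (js ks : Fin n → Fin d) :
    TP xs π js * TP xs π ks = if js = ks then TP xs π js else 0 := by
  show tensorPow _ * tensorPow _ = _
  rw [tensorPow_mul]
  by_cases h : js = ks
  · subst h
    rw [if_pos rfl]
    exact congrArg tensorPow (funext fun i => hidem (xs i) (js i))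
  · rw [if_neg h]
    have : ∃ i, js i ≠ ks i := by
      by_contra hc
      push_neg at hc
      exact h (funext hc)
    obtain ⟨i₀, hi₀⟩ := this
    exact tensorPow_eq_zero (i₀ := i₀) (horth (xs i₀) _ _ hi₀)

lemma TP_posSemidef (hpsd : ∀ x j, (π x j).PosSemidef)
    (hidem : ∀ x j, π x j * π x j = π x j) (js : Fin n → Fin d) :
    (TP xs π js).PosSemidef := by
  have hherm : (TP xs π js)ᴴ = TP xs π js := by
    show (tensorPow _)ᴴ = _
    rw [tensorPow_conjTranspose]
    exact congrArg tensorPow (funext fun i => (hpsd (xs i) (js i)).1)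
  have hsq : TP xs π js = (TP xs π js)ᴴ * TP xs π js := by
    rw [hherm]
    show tensorPow _ = tensorPow _ * tensorPow _
    rw [tensorPow_mul]
    exact (congrArg tensorPow (funext fun i => (hidem (xs i) (js i)))).symm
  rw [hsq]
  exact Matrix.posSemidef_conjTranspose_mul_self _
set_option linter.unusedSectionVars false

lemma condTypicalProj_eq (δ : ℝ) :
    condTypicalProj xs q π δ = ∑ js ∈ condTypicalSet xs q δ, TP xs π js := rfl

lemma tensorW_expand (W : X → Mat d)
    (hW : ∀ x, W x = ∑ j, ((q x j : ℝ) : ℂ) • π x j) :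
    tensorPow (fun i => W (xs i))
      = ∑ ls : Fin n → Fin d, ((∏ i, q (xs i) (ls i) : ℝ) : ℂ) • TP xs π ls := by
  ext a b
  simp only [tensorPow, Matrix.of_apply]
  have hpt : ∀ i, W (xs i) (a i) (b i)
      = ∑ j, ((q (xs i) j : ℝ) : ℂ) * π (xs i) j (a i) (b i) := by
    intro i
    rw [hW (xs i)]
    simp [Matrix.sum_apply]
  rw [Finset.prod_congr rfl fun i _ => hpt i]
  rw [Fintype.prod_sum (fun i j => ((q (xs i) j : ℝ) : ℂ) * π (xs i) j (a i) (b i))]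
  rw [Matrix.sum_apply]
  refine Finset.sum_congr rfl fun ls _ => ?_
  rw [Finset.prod_mul_distrib]
  simp only [Matrix.smul_apply, TP, tensorPow, Matrix.of_apply, smul_eq_mul]
  rw [Complex.ofReal_prod]

lemma proj_W_proj (W : X → Mat d)
    (hW : ∀ x, W x = ∑ j, ((q x j : ℝ) : ℂ) • π x j)
    (hidem : ∀ x j, π x j * π x j = π x j)
    (horth : ∀ x j k, j ≠ k → π x j * π x k = 0) (δ : ℝ) :
    condTypicalProj xs q π δ * tensorPow (fun i => W (xs i)) * condTypicalProj xs q π δ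
      = ∑ js ∈ condTypicalSet xs q δ, ((∏ i, q (xs i) (js i) : ℝ) : ℂ) • TP xs π js := by
  rw [condTypicalProj_eq, tensorW_expand xs q π W hW]
  have step1 : (∑ ls : Fin n → Fin d, ((∏ i, q (xs i) (ls i) : ℝ) : ℂ) • TP xs π ls)
      * (∑ ks ∈ condTypicalSet xs q δ, TP xs π ks)
      = ∑ ks ∈ condTypicalSet xs q δ, ((∏ i, q (xs i) (ks i) : ℝ) : ℂ) • TP xs π ks := by
    rw [Finset.sum_mul]
    have hpt : ∀ ls : Fin n → Fin d,
        (((∏ i, q (xs i) (ls i) : ℝ) : ℂ) • TP xs π ls) * (∑ ks ∈ condTypicalSet xs q δ, TP xs π ks)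
        = ∑ ks ∈ condTypicalSet xs q δ,
            if ls = ks then ((∏ i, q (xs i) (ls i) : ℝ) : ℂ) • TP xs π ls else 0 := by
      intro ls
      rw [Finset.mul_sum]
      refine Finset.sum_congr rfl fun ks _ => ?_
      rw [Matrix.smul_mul, TP_mul_TP xs π hidem horth ls ks]
      by_cases h : ls = ks
      · rw [if_pos h, if_pos h]
      · rw [if_neg h, if_neg h, smul_zero]
    rw [Finset.sum_congr rfl fun ls _ => hpt ls]
    rw [Finset.sum_comm]
    refine Finset.sum_congr rfl fun ks hks => ?_
    have : ∀ ls : Fin n → Fin d,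
        (if ls = ks then ((∏ i, q (xs i) (ls i) : ℝ) : ℂ) • TP xs π ls else 0)
        = if ls = ks then ((∏ i, q (xs i) (ks i) : ℝ) : ℂ) • TP xs π ks else 0 := by
      intro ls
      by_cases h : ls = ks
      · subst h; rfl
      · rw [if_neg h, if_neg h]
    rw [Finset.sum_congr rfl fun ls _ => this ls,
      Finset.sum_ite_eq' Finset.univ ks (fun _ => ((∏ i, q (xs i) (ks i) : ℝ) : ℂ) • TP xs π ks)]
    simp
  rw [mul_assoc, step1, Finset.mul_sum]
  have hpt2 : ∀ ks ∈ condTypicalSet xs q δ,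
      (∑ js ∈ condTypicalSet xs q δ, TP xs π js)
          * (((∏ i, q (xs i) (ks i) : ℝ) : ℂ) • TP xs π ks)
      = ((∏ i, q (xs i) (ks i) : ℝ) : ℂ) • TP xs π ks := by
    intro ks hks
    rw [Finset.sum_mul]
    have : ∀ js : Fin n → Fin d,
        TP xs π js * (((∏ i, q (xs i) (ks i) : ℝ) : ℂ) • TP xs π ks)
        = if js = ks then ((∏ i, q (xs i) (ks i) : ℝ) : ℂ) • TP xs π ks else 0 := by
      intro js
      rw [Matrix.mul_smul, TP_mul_TP xs π hidem horth js ks]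
      by_cases h : js = ks
      · subst h; rw [if_pos rfl, if_pos rfl]
      · rw [if_neg h, if_neg h, smul_zero]
    rw [Finset.sum_congr rfl fun js _ => this js]
    rw [Finset.sum_ite_eq' (condTypicalSet xs q δ) ks
      (fun _ => ((∏ i, q (xs i) (ks i) : ℝ) : ℂ) • TP xs π ks)]
    rw [if_pos hks]
  exact Finset.sum_congr rfl hpt2

lemma trace_TP (htr : ∀ x j, (π x j).trace = 1) (js : Fin n → Fin d) :
    (TP xs π js).trace = 1 := by
  show (tensorPow _).trace = 1
  rw [tensorPow_trace]
  simp [htr]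

lemma trace_proj (htr : ∀ x j, (π x j).trace = 1) (δ : ℝ) :
    (condTypicalProj xs q π δ).trace = ((condTypicalSet xs q δ).card : ℂ) := by
  rw [condTypicalProj_eq, Matrix.trace_sum]
  rw [Finset.sum_congr rfl fun js _ => trace_TP xs π htr js]
  simp

end MatrixLayer
section ScalarBound
set_option maxHeartbeats 1000000

lemma sum_fiber {X : Type} [Fintype X] {d n : ℕ} (xs : Fin n → X) (js : Fin n → Fin d)
    (f : X → Fin d → ℝ) :
    ∑ i, f (xs i) (js i)
      = ∑ x, ∑ k, ((Finset.univ.filter fun i => xs i = x ∧ js i = k).card : ℝ) * f x k := by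
  classical
  calc ∑ i, f (xs i) (js i)
      = ∑ i, ∑ x, ∑ k, if xs i = x ∧ js i = k then f x k else 0 := by
        refine Finset.sum_congr rfl fun i _ => ?_
        have hx : ∀ x, (∑ k, if xs i = x ∧ js i = k then f x k else 0)
            = if xs i = x then f x (js i) else 0 := by
          intro x
          by_cases h : xs i = x
          · simp only [h, true_and]
            rw [Finset.sum_ite_eq Finset.univ (js i) (fun k => f x k)]
            simp
          · simp [h]
        rw [Finset.sum_congr rfl fun x _ => hx x,
          Finset.sum_ite_eq Finset.univ (xs i) (fun x => f x (js i))]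
        simp
    _ = ∑ x, ∑ k, ∑ i, if xs i = x ∧ js i = k then f x k else 0 := by
        rw [Finset.sum_comm]
        exact Finset.sum_congr rfl fun x _ => Finset.sum_comm
    _ = ∑ x, ∑ k, ((Finset.univ.filter fun i => xs i = x ∧ js i = k).card : ℝ) * f x k := by
        refine Finset.sum_congr rfl fun x _ => Finset.sum_congr rfl fun k _ => ?_
        rw [← Finset.sum_filter, Finset.sum_const, nsmul_eq_mul]

lemma sum_countIn {X : Type} [Fintype X] {n : ℕ} (xs : Fin n → X) :
    ∑ x, ((countIn x xs : ℝ)) = n := by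
  classical
  have : ∀ x : X, ((countIn x xs : ℝ)) = ∑ i, if xs i = x then (1:ℝ) else 0 := by
    intro x
    rw [countIn, ← Finset.sum_filter, Finset.sum_const, nsmul_eq_mul, mul_one]
  rw [Finset.sum_congr rfl fun x _ => this x, Finset.sum_comm]
  have hrow : ∀ i, ∑ x : X, (if xs i = x then (1:ℝ) else 0) = 1 := by
    intro i
    rw [Finset.sum_ite_eq Finset.univ (xs i) (fun _ => (1:ℝ))]
    simp
  rw [Finset.sum_congr rfl fun i _ => hrow i]
  simp

lemma exp2_pos (t : ℝ) : 0 < exp2 t := Real.rpow_pos_of_pos (by norm_num) t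

lemma exp2_add (s t : ℝ) : exp2 (s + t) = exp2 s * exp2 t := Real.rpow_add (by norm_num) s t

lemma exp2_le_exp2 {s t : ℝ} (h : s ≤ t) : exp2 s ≤ exp2 t :=
  Real.rpow_le_rpow_of_exponent_le (by norm_num) h

lemma exp2_logb {p : ℝ} (hp : 0 < p) : exp2 (Real.logb 2 p) = p :=
  Real.rpow_logb (by norm_num) (by norm_num) hp

lemma typical_prob_bound {X : Type} [Fintype X] {d n : ℕ}
    (xs : Fin n → X) (q : X → Fin d → ℝ) (hq : ∀ x, IsProbDist (q x))
    (P : X → ℝ) (htype : ∀ x, (countIn x xs : ℝ) = n * P x)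
    {δ : ℝ} (hδ : 0 ≤ δ) (H : ℝ)
    (hH : H = ∑ x, P x * (-∑ k, q x k * Real.logb 2 (q x k)))
    {js : Fin n → Fin d} (hjs : js ∈ condTypicalSet xs q δ) :
    exp2 (-((n:ℝ) * H) - Kconst * d * Real.sqrt (Fintype.card X) * δ * Real.sqrt n)
      ≤ ∏ i, q (xs i) (js i) ∧
    ∏ i, q (xs i) (js i)
      ≤ exp2 (-((n:ℝ) * H) + Kconst * d * Real.sqrt (Fintype.card X) * δ * Real.sqrt n) := by
  classical
  rw [condTypicalSet, Finset.mem_filter] at hjs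
  have hmem := hjs.2
  have hq01 : ∀ x k, 0 ≤ q x k ∧ q x k ≤ 1 := by
    intro x k
    refine ⟨(hq x).1 k, ?_⟩
    have := Finset.single_le_sum (f := q x) (fun j _ => (hq x).1 j) (Finset.mem_univ k)
    rw [(hq x).2] at this
    exact this
  -- positivity of the factors
  have hpos : ∀ i, 0 < q (xs i) (js i) := by
    intro i
    rcases lt_or_eq_of_le ((hq (xs i)).1 (js i)) with h | h
    · exact h
    · exfalso
      have hb := hmem (xs i) (js i)
      have hz : q (xs i) (js i) * (1 - q (xs i) (js i)) = 0 := by rw [← h]; ring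
      rw [hz, Real.sqrt_zero, mul_zero] at hb
      have hcard : (1:ℝ) ≤ ((Finset.univ.filter fun i' => xs i' = xs i ∧ js i' = js i).card : ℝ) := by
        have : i ∈ Finset.univ.filter fun i' => xs i' = xs i ∧ js i' = js i := by
          simp
        have := Finset.card_pos.mpr ⟨i, this⟩
        exact_mod_cast this
      have : (countIn (xs i) xs : ℝ) * q (xs i) (js i) = 0 := by rw [← h]; ring
      rw [this, sub_zero, abs_of_nonneg (by positivity)] at hb
      linarith
  have hppos : 0 < ∏ i, q (xs i) (js i) := Finset.prod_pos fun i _ => hpos i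
  -- logb of the product
  have hlogp : Real.logb 2 (∏ i, q (xs i) (js i)) = ∑ i, Real.logb 2 (q (xs i) (js i)) := by
    rw [Real.logb, Real.log_prod (fun i _ => ne_of_gt (hpos i)), Finset.sum_div]
    rfl
  -- regroup
  have hregroup : ∑ i, Real.logb 2 (q (xs i) (js i))
      = ∑ x, ∑ k, ((Finset.univ.filter fun i => xs i = x ∧ js i = k).card : ℝ)
          * Real.logb 2 (q x k) :=
    sum_fiber xs js (fun x k => Real.logb 2 (q x k))
  -- n * H in the same form
  have hnH : (n:ℝ) * H = -∑ x, ∑ k, (countIn x xs : ℝ) * q x k * Real.logb 2 (q x k) := by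
    rw [hH, Finset.mul_sum, ← Finset.sum_neg_distrib]
    refine Finset.sum_congr rfl fun x _ => ?_
    rw [htype x]
    have hinner : ∑ k, ((n:ℝ) * P x) * q x k * Real.logb 2 (q x k)
        = ((n:ℝ) * P x) * ∑ k, q x k * Real.logb 2 (q x k) := by
      rw [Finset.mul_sum]
      exact Finset.sum_congr rfl fun k _ => by ring
    rw [hinner]
    ring
  -- the deviation bound
  have hdev : |Real.logb 2 (∏ i, q (xs i) (js i)) + (n:ℝ) * H|
      ≤ Kconst * d * Real.sqrt (Fintype.card X) * δ * Real.sqrt n := by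
    rw [hlogp, hregroup, hnH]
    have hform : ∑ x, ∑ k, ((Finset.univ.filter fun i => xs i = x ∧ js i = k).card : ℝ)
          * Real.logb 2 (q x k)
        + -∑ x, ∑ k, (countIn x xs : ℝ) * q x k * Real.logb 2 (q x k)
      = ∑ x, ∑ k, (((Finset.univ.filter fun i => xs i = x ∧ js i = k).card : ℝ)
          - (countIn x xs : ℝ) * q x k) * Real.logb 2 (q x k) := by
      rw [← sub_eq_add_neg, ← Finset.sum_sub_distrib]
      refine Finset.sum_congr rfl fun x _ => ?_
      rw [← Finset.sum_sub_distrib]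
      refine Finset.sum_congr rfl fun k _ => ?_
      ring
    rw [hform]
    have hpt : ∀ (x : X) (k : Fin d),
        |(((Finset.univ.filter fun i => xs i = x ∧ js i = k).card : ℝ)
            - (countIn x xs : ℝ) * q x k) * Real.logb 2 (q x k)|
          ≤ δ * Real.sqrt (countIn x xs) * Kconst := by
      intro x k
      rw [abs_mul]
      calc |((Finset.univ.filter fun i => xs i = x ∧ js i = k).card : ℝ)
              - (countIn x xs : ℝ) * q x k| * |Real.logb 2 (q x k)|
          ≤ (δ * Real.sqrt (countIn x xs) * Real.sqrt (q x k * (1 - q x k)))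
              * |Real.logb 2 (q x k)| :=
            mul_le_mul_of_nonneg_right (hmem x k) (abs_nonneg _)
        _ = (δ * Real.sqrt (countIn x xs))
              * (Real.sqrt (q x k * (1 - q x k)) * |Real.logb 2 (q x k)|) := by ring
        _ ≤ (δ * Real.sqrt (countIn x xs)) * Kconst := by
            apply mul_le_mul_of_nonneg_left
              (sqrt_mul_abs_logb_le (hq01 x k).1 (hq01 x k).2)
            positivity
        _ = δ * Real.sqrt (countIn x xs) * Kconst := by ring
    calc |∑ x, ∑ k, (((Finset.univ.filter fun i => xs i = x ∧ js i = k).card : ℝ)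
            - (countIn x xs : ℝ) * q x k) * Real.logb 2 (q x k)|
        ≤ ∑ x, |∑ k, (((Finset.univ.filter fun i => xs i = x ∧ js i = k).card : ℝ)
            - (countIn x xs : ℝ) * q x k) * Real.logb 2 (q x k)| :=
          Finset.abs_sum_le_sum_abs _ _
      _ ≤ ∑ x, ∑ k, |(((Finset.univ.filter fun i => xs i = x ∧ js i = k).card : ℝ)
            - (countIn x xs : ℝ) * q x k) * Real.logb 2 (q x k)| :=
          Finset.sum_le_sum fun x _ => Finset.abs_sum_le_sum_abs _ _
      _ ≤ ∑ x, ∑ k : Fin d, δ * Real.sqrt (countIn x xs) * Kconst :=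
          Finset.sum_le_sum fun x _ => Finset.sum_le_sum fun k _ => hpt x k
      _ = (d:ℝ) * δ * Kconst * ∑ x, Real.sqrt (countIn x xs) := by
          rw [Finset.mul_sum]
          refine Finset.sum_congr rfl fun x _ => ?_
          rw [Finset.sum_const, Finset.card_univ, Fintype.card_fin, nsmul_eq_mul]
          ring
      _ ≤ (d:ℝ) * δ * Kconst * (Real.sqrt (Fintype.card X) * Real.sqrt n) := by
          apply mul_le_mul_of_nonneg_left
          · have := sum_sqrt_le_sqrt_card (fun x => (countIn x xs : ℝ))
              (fun x => Nat.cast_nonneg _)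
            rwa [sum_countIn xs] at this
          · have := Kconst_nonneg
            positivity
      _ = Kconst * d * Real.sqrt (Fintype.card X) * δ * Real.sqrt n := by ring
  have hint := abs_le.mp hdev
  constructor
  · have h := exp2_le_exp2 (show -((n:ℝ) * H)
        - Kconst * d * Real.sqrt (Fintype.card X) * δ * Real.sqrt n
        ≤ Real.logb 2 (∏ i, q (xs i) (js i)) by linarith [hint.1])
    rwa [exp2_logb hppos] at h
  · have h := exp2_le_exp2 (show Real.logb 2 (∏ i, q (xs i) (js i))
        ≤ -((n:ℝ) * H) + Kconst * d * Real.sqrt (Fintype.card X) * δ * Real.sqrt n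
        by linarith [hint.2])
    rwa [exp2_logb hppos] at h

end ScalarBound

/-- **Lemma 4, parts 2–3 (Conditional typical projector, sandwich and trace bounds).**
For `x^n` of type `P`, writing `Π^n = Π^n_{W,δ}(x^n)`:
`Π^n exp₂(−nH(W|P) − Kd√a δ√n) ≤ Π^n W_{x^n} Π^n ≤ Π^n exp₂(−nH(W|P) + Kd√a δ√n)`,
`Tr Π^n ≤ exp₂(nH(W|P) + Kd√a δ√n)`, and for `δ > 0` also
`Tr Π^n ≥ (1 − ad/δ²) exp₂(nH(W|P) − Kd√a δ√n)`, with `K = 2 log₂(e)/e`. -/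
theorem condTypicalProj_sandwich_and_trace {X : Type} [Fintype X] {d : ℕ}
    (W : X → Mat d) (hW : ∀ x, IsState (W x))
    (q : X → Fin d → ℝ) (π : X → Fin d → Mat d)
    (hdiag : ∀ x, IsDiagonalization (W x) (q x) (π x))
    (n : ℕ) (hn : 0 < n) (xs : Fin n → X) (P : X → ℝ) (hP : IsProbDist P)
    (htype : ∀ x, (countIn x xs : ℝ) = n * P x)
    (δ : ℝ) (hδ : 0 ≤ δ) :
    (condTypicalProj xs q π δ * tensorPow (fun i => W (xs i)) * condTypicalProj xs q π δ -
        ((exp2 (-((n : ℝ) * condEntropy P W) -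
            Kconst * d * Real.sqrt (Fintype.card X) * δ * Real.sqrt n) : ℝ) : ℂ) •
          condTypicalProj xs q π δ).PosSemidef ∧
      (((exp2 (-((n : ℝ) * condEntropy P W) +
            Kconst * d * Real.sqrt (Fintype.card X) * δ * Real.sqrt n) : ℝ) : ℂ) •
          condTypicalProj xs q π δ -
        condTypicalProj xs q π δ * tensorPow (fun i => W (xs i)) *
          condTypicalProj xs q π δ).PosSemidef ∧
      (Matrix.trace (condTypicalProj xs q π δ)).re
        ≤ exp2 ((n : ℝ) * condEntropy P W +
            Kconst * d * Real.sqrt (Fintype.card X) * δ * Real.sqrt n) ∧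
      (0 < δ →
        (1 - (Fintype.card X : ℝ) * d / δ ^ 2) *
            exp2 ((n : ℝ) * condEntropy P W -
              Kconst * d * Real.sqrt (Fintype.card X) * δ * Real.sqrt n)
          ≤ (Matrix.trace (condTypicalProj xs q π δ)).re) := by

  classical
  have hpsd : ∀ x j, (π x j).PosSemidef := fun x => (hdiag x).1
  have hidem : ∀ x j, π x j * π x j = π x j := fun x => (hdiag x).2.1
  have htr : ∀ x j, (π x j).trace = 1 := fun x => (hdiag x).2.2.1
  have horth : ∀ x j k, j ≠ k → π x j * π x k = 0 := fun x => (hdiag x).2.2.2.1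
  have hWeq : ∀ x, W x = ∑ j, ((q x j : ℝ) : ℂ) • π x j := fun x => (hdiag x).2.2.2.2.2.1
  have hq : ∀ x, IsProbDist (q x) := fun x => (hdiag x).2.2.2.2.2.2
  set H : ℝ := condEntropy P W with hH0
  set B : ℝ := Kconst * d * Real.sqrt (Fintype.card X) * δ * Real.sqrt n with hB
  have hHform : H = ∑ x, P x * (-∑ k, q x k * Real.logb 2 (q x k)) := by
    rw [hH0, condEntropy]
    refine Finset.sum_congr rfl fun x _ => ?_
    rw [vnEntropy_eq_of_diag (hW x).1.1 (hdiag x)]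
  have hscal : ∀ js ∈ condTypicalSet xs q δ,
      exp2 (-((n:ℝ) * H) - B) ≤ ∏ i, q (xs i) (js i) ∧
      ∏ i, q (xs i) (js i) ≤ exp2 (-((n:ℝ) * H) + B) :=
    fun js hjs => typical_prob_bound xs q hq P htype hδ H hHform hjs
  have htrace : (Matrix.trace (condTypicalProj xs q π δ)).re
      = ((condTypicalSet xs q δ).card : ℝ) := by
    rw [trace_proj xs q π htr δ]
    simp
  refine ⟨?_, ?_, ?_, ?_⟩
  · -- lower sandwich
    have hdiff : condTypicalProj xs q π δ * tensorPow (fun i => W (xs i)) *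
          condTypicalProj xs q π δ
        - ((exp2 (-((n:ℝ) * H) - B) : ℝ) : ℂ) • condTypicalProj xs q π δ
        = ∑ js ∈ condTypicalSet xs q δ,
            (((∏ i, q (xs i) (js i)) - exp2 (-((n:ℝ) * H) - B) : ℝ) : ℂ) • TP xs π js := by
      rw [proj_W_proj xs q π W hWeq hidem horth δ, condTypicalProj_eq, Finset.smul_sum,
        ← Finset.sum_sub_distrib]
      refine Finset.sum_congr rfl fun js _ => ?_
      rw [← sub_smul]
      congr 1
      push_cast
      ring
    rw [hdiff]
    apply psd_sum
    intro js hjs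
    exact psd_smul (TP_posSemidef xs π hpsd hidem js)
      (by linarith [(hscal js hjs).1])
  · -- upper sandwich
    have hdiff : ((exp2 (-((n:ℝ) * H) + B) : ℝ) : ℂ) • condTypicalProj xs q π δ
        - condTypicalProj xs q π δ * tensorPow (fun i => W (xs i)) *
            condTypicalProj xs q π δ
        = ∑ js ∈ condTypicalSet xs q δ,
            ((exp2 (-((n:ℝ) * H) + B) - (∏ i, q (xs i) (js i)) : ℝ) : ℂ) • TP xs π js := by
      rw [proj_W_proj xs q π W hWeq hidem horth δ, condTypicalProj_eq, Finset.smul_sum,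
        ← Finset.sum_sub_distrib]
      refine Finset.sum_congr rfl fun js _ => ?_
      rw [← sub_smul]
      congr 1
      push_cast
      ring
    rw [hdiff]
    apply psd_sum
    intro js hjs
    exact psd_smul (TP_posSemidef xs π hpsd hidem js)
      (by linarith [(hscal js hjs).2])
  · -- trace upper bound
    rw [htrace]
    have hsum_le_one : ∑ js ∈ condTypicalSet xs q δ, ∏ i, q (xs i) (js i) ≤ 1 := by
      have h1 : ∑ js : Fin n → Fin d, ∏ i, q (xs i) (js i) = 1 :=
        sum_prod_dist (fun i => (hq (xs i)).2)
      rw [← h1]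
      exact Finset.sum_le_sum_of_subset_of_nonneg (Finset.subset_univ _)
        (fun js _ _ => Finset.prod_nonneg fun i _ => (hq (xs i)).1 _)
    have hlb : ((condTypicalSet xs q δ).card : ℝ) * exp2 (-((n:ℝ) * H) - B)
        ≤ ∑ js ∈ condTypicalSet xs q δ, ∏ i, q (xs i) (js i) := by
      calc ((condTypicalSet xs q δ).card : ℝ) * exp2 (-((n:ℝ) * H) - B)
          = ∑ _js ∈ condTypicalSet xs q δ, exp2 (-((n:ℝ) * H) - B) := by
            rw [Finset.sum_const, nsmul_eq_mul]
        _ ≤ ∑ js ∈ condTypicalSet xs q δ, ∏ i, q (xs i) (js i) :=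
            Finset.sum_le_sum fun js hjs => (hscal js hjs).1
    calc ((condTypicalSet xs q δ).card : ℝ)
        = (((condTypicalSet xs q δ).card : ℝ) * exp2 (-((n:ℝ) * H) - B))
            * exp2 ((n:ℝ) * H + B) := by
          rw [mul_assoc, ← exp2_add]
          have : -((n:ℝ) * H) - B + ((n:ℝ) * H + B) = 0 := by ring
          rw [this]
          have h0 : exp2 0 = 1 := Real.rpow_zero 2
          rw [h0, mul_one]
      _ ≤ 1 * exp2 ((n:ℝ) * H + B) :=
          mul_le_mul_of_nonneg_right (hlb.trans hsum_le_one) (exp2_pos _).le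
      _ = exp2 ((n:ℝ) * H + B) := one_mul _
  · -- trace lower bound
    intro hδpos
    rw [htrace]
    have hmass := typical_mass xs q hq hδpos
    have hub : ∑ js ∈ condTypicalSet xs q δ, ∏ i, q (xs i) (js i)
        ≤ ((condTypicalSet xs q δ).card : ℝ) * exp2 (-((n:ℝ) * H) + B) := by
      calc ∑ js ∈ condTypicalSet xs q δ, ∏ i, q (xs i) (js i)
          ≤ ∑ _js ∈ condTypicalSet xs q δ, exp2 (-((n:ℝ) * H) + B) :=
            Finset.sum_le_sum fun js hjs => (hscal js hjs).2
        _ = ((condTypicalSet xs q δ).card : ℝ) * exp2 (-((n:ℝ) * H) + B) := by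
            rw [Finset.sum_const, nsmul_eq_mul]
    have hchain : (1 - (Fintype.card X : ℝ) * d / δ ^ 2)
        ≤ ((condTypicalSet xs q δ).card : ℝ) * exp2 (-((n:ℝ) * H) + B) :=
      le_trans hmass hub
    calc (1 - (Fintype.card X : ℝ) * d / δ ^ 2) * exp2 ((n:ℝ) * H - B)
        ≤ (((condTypicalSet xs q δ).card : ℝ) * exp2 (-((n:ℝ) * H) + B))
            * exp2 ((n:ℝ) * H - B) :=
          mul_le_mul_of_nonneg_right hchain (exp2_pos _).le
      _ = ((condTypicalSet xs q δ).card : ℝ) := by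
          rw [mul_assoc, ← exp2_add]
          have : -((n:ℝ) * H) + B + ((n:ℝ) * H - B) = 0 := by ring
          rw [this]
          have h0 : exp2 0 = 1 := Real.rpow_zero 2
          rw [h0, mul_one]
end
end

section
/- (Gentle measurement lemma) Let ρ be a density operator on a finite-dimensional complex Hilbert space, and X a positive semidefinite operator with X ≤ 1 (identity) and 1 − Tr(ρX) ≤ λ ≤ 1. Then ‖ρ − √X ρ √X‖₁ ≤ √(8λ), where √X is the positive semidefinite square root of X and ‖·‖₁ is the trace norm. -/
open Matrix BigOperators Finset
open scoped Classical ComplexOrder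

noncomputable section

/-- The positive semidefinite square root of a positive semidefinite matrix
(the definition `Matrix.PosSemidef.sqrt` of the older Mathlib, removed since). -/
def Matrix.PosSemidef.sqrt {n 𝕜 : Type*} [Fintype n] [RCLike 𝕜] [DecidableEq n]
    {A : Matrix n n 𝕜} (hA : A.PosSemidef) : Matrix n n 𝕜 :=
  hA.1.eigenvectorUnitary.1 * diagonal ((↑) ∘ Real.sqrt ∘ hA.1.eigenvalues) *
    (star hA.1.eigenvectorUnitary : Matrix n n 𝕜)

section SqrtPort

open scoped MatrixOrder

variable {ι : Type} [Fintype ι] [DecidableEq ι]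

lemma Matrix.PosSemidef.sqrt_eq_cfcSqrt {A : Matrix ι ι ℂ} (hA : A.PosSemidef) :
    hA.sqrt = CFC.sqrt A := by
  rw [CFC.sqrt_eq_real_sqrt A hA.nonneg, cfcₙ_eq_cfc (hf0 := Real.sqrt_zero), hA.1.cfc_eq]
  simp [Matrix.IsHermitian.cfc, Matrix.PosSemidef.sqrt, Unitary.conjStarAlgAut_apply]

lemma Matrix.PosSemidef.sqrt_mul_self {A : Matrix ι ι ℂ} (hA : A.PosSemidef) :
    hA.sqrt * hA.sqrt = A := by
  rw [hA.sqrt_eq_cfcSqrt, CFC.sqrt_mul_sqrt_self A hA.nonneg]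

lemma Matrix.PosSemidef.posSemidef_sqrt {A : Matrix ι ι ℂ} (hA : A.PosSemidef) :
    hA.sqrt.PosSemidef := by
  rw [hA.sqrt_eq_cfcSqrt]
  exact (CFC.sqrt_nonneg A).posSemidef

lemma Matrix.PosSemidef.eq_sqrt_of_sq_eq {A B : Matrix ι ι ℂ} (hB : B.PosSemidef)
    (hA : A.PosSemidef) (h : B ^ 2 = A) : B = hA.sqrt := by
  rw [hA.sqrt_eq_cfcSqrt]
  exact (CFC.sqrt_unique (by rw [← sq]; exact h) hB.nonneg).symm

end SqrtPort

section GentleHelpers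

variable {ι : Type} [Fintype ι] [DecidableEq ι]

lemma psd_trace_re_nonneg {M : Matrix ι ι ℂ} (hM : M.PosSemidef) :
    0 ≤ (Matrix.trace M).re := by
  have h : ∀ i, 0 ≤ (M i i).re := fun i => by
    simpa [dotProduct, Matrix.mulVec, Pi.single_apply] using
      hM.re_dotProduct_nonneg (Pi.single i 1)
  rw [Matrix.trace, Complex.re_sum]
  exact Finset.sum_nonneg fun i _ => h i

lemma psd_trace_mul_re_nonneg {A B : Matrix ι ι ℂ} (hA : A.PosSemidef) (hB : B.PosSemidef) :
    0 ≤ (Matrix.trace (A * B)).re := by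
  have h1 : A = hA.sqrt * hA.sqrt := hA.sqrt_mul_self.symm
  have h2 : Matrix.trace (A * B) = Matrix.trace (hA.sqrt * B * hA.sqrt) := by
    conv_lhs => rw [h1]
    rw [Matrix.mul_assoc, Matrix.trace_mul_comm, Matrix.mul_assoc]
  rw [h2]
  have : (hA.sqrt * B * hA.sqrt).PosSemidef := by
    have := hB.mul_mul_conjTranspose_same hA.sqrt
    rwa [hA.posSemidef_sqrt.1.eq] at this
  exact psd_trace_re_nonneg this

omit [DecidableEq ι] in
lemma trace_herm (M N : Matrix ι ι ℂ) :
    Matrix.trace (Mᴴ * N) = ∑ p : ι × ι, (starRingEnd ℂ) (M p.2 p.1) * N p.2 p.1 := by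
  rw [Fintype.sum_prod_type]
  simp [Matrix.trace, Matrix.mul_apply, Matrix.conjTranspose_apply, Matrix.diag]

omit [DecidableEq ι] in
lemma trace_self_re (M : Matrix ι ι ℂ) :
    (Matrix.trace (Mᴴ * M)).re = ∑ p : ι × ι, ‖M p.2 p.1‖ ^ 2 := by
  rw [trace_herm, Complex.re_sum]
  congr 1; ext p
  rw [mul_comm, Complex.mul_conj]
  simp [Complex.sq_norm]

omit [DecidableEq ι] in
/-- Cauchy-Schwarz for the trace inner product. -/
lemma trace_cs (A B : Matrix ι ι ℂ) :
    (Matrix.trace (Aᴴ * B)).re ≤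
      Real.sqrt (Matrix.trace (Aᴴ * A)).re * Real.sqrt (Matrix.trace (Bᴴ * B)).re := by
  set f : ι × ι → ℝ := fun p => ‖A p.2 p.1‖ with hf
  set g : ι × ι → ℝ := fun p => ‖B p.2 p.1‖ with hg
  have h1 : (Matrix.trace (Aᴴ * B)).re ≤ ∑ p : ι × ι, f p * g p := by
    calc (Matrix.trace (Aᴴ * B)).re ≤ ‖Matrix.trace (Aᴴ * B)‖ :=
          Complex.re_le_norm _
      _ ≤ ∑ p : ι × ι, ‖(starRingEnd ℂ) (A p.2 p.1) * B p.2 p.1‖ := by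
          rw [trace_herm]; exact norm_sum_le _ _
      _ = ∑ p : ι × ι, f p * g p := by
          congr 1; ext p; rw [norm_mul, Complex.norm_conj]
  have hfg : ∑ p : ι × ι, f p * g p ≤
      Real.sqrt (∑ p : ι × ι, f p ^ 2) * Real.sqrt (∑ p : ι × ι, g p ^ 2) := by
    have hcs := Finset.sum_mul_sq_le_sq_mul_sq Finset.univ f g
    have hnn : 0 ≤ ∑ p : ι × ι, f p * g p :=
      Finset.sum_nonneg fun p _ => mul_nonneg (norm_nonneg _) (norm_nonneg _)
    calc ∑ p : ι × ι, f p * g p = Real.sqrt ((∑ p : ι × ι, f p * g p) ^ 2) := by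
          rw [Real.sqrt_sq hnn]
      _ ≤ Real.sqrt ((∑ p : ι × ι, f p ^ 2) * ∑ p : ι × ι, g p ^ 2) :=
          Real.sqrt_le_sqrt hcs
      _ = _ := Real.sqrt_mul (Finset.sum_nonneg fun p _ => sq_nonneg _) _
  rw [trace_self_re, trace_self_re]
  exact h1.trans hfg

lemma conj_diag_mul (U : Matrix ι ι ℂ) (hU : star U * U = 1) (a b : ι → ℂ) :
    (U * diagonal a * star U) * (U * diagonal b * star U)
      = U * diagonal (fun i => a i * b i) * star U := by
  have : diagonal a * (star U * U) * diagonal b = diagonal (fun i => a i * b i) := by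
    rw [hU, mul_one, diagonal_mul_diagonal]
  calc (U * diagonal a * star U) * (U * diagonal b * star U)
      = U * (diagonal a * (star U * U) * diagonal b) * star U := by
        simp only [Matrix.mul_assoc]
    _ = U * diagonal (fun i => a i * b i) * star U := by rw [this]

lemma conj_diag_sub (U : Matrix ι ι ℂ) (a b : ι → ℂ) :
    (U * diagonal a * star U) - (U * diagonal b * star U)
      = U * diagonal (fun i => a i - b i) * star U := by
  rw [← Matrix.sub_mul, ← Matrix.mul_sub]
  congr 1
  congr 1
  rw [Matrix.diagonal_sub]

lemma conj_diag_trace (U : Matrix ι ι ℂ) (hU : star U * U = 1) (a : ι → ℂ) :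
    Matrix.trace (U * diagonal a * star U) = ∑ i, a i := by
  rw [Matrix.trace_mul_cycle, hU, Matrix.one_mul, Matrix.trace_diagonal]

omit [Fintype ι] in
lemma diag_real_herm (f : ι → ℝ) :
    (diagonal (fun i => ((f i : ℝ) : ℂ)))ᴴ = diagonal (fun i => ((f i : ℝ) : ℂ)) := by
  have h : (star fun i => ((f i : ℝ) : ℂ)) = fun i => ((f i : ℝ) : ℂ) :=
    funext fun i => Complex.conj_ofReal _
  rw [Matrix.diagonal_conjTranspose, h]

lemma conj_diag_psd (U : Matrix ι ι ℂ) (f : ι → ℝ) (hf : ∀ i, 0 ≤ f i) :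
    (U * diagonal (fun i => ((f i : ℝ) : ℂ)) * star U).PosSemidef := by
  have hd : (diagonal (fun i => ((f i : ℝ) : ℂ))).PosSemidef :=
    Matrix.posSemidef_diagonal_iff.mpr fun i => by
      simpa using Complex.zero_le_real.mpr (hf i)
  simpa [Matrix.star_eq_conjTranspose] using hd.mul_mul_conjTranspose_same U

lemma conj_diag_herm (U : Matrix ι ι ℂ) (f : ι → ℝ) :
    (U * diagonal (fun i => ((f i : ℝ) : ℂ)) * star U).IsHermitian := by
  rw [Matrix.IsHermitian, Matrix.conjTranspose_mul, Matrix.conjTranspose_mul, diag_real_herm,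
    Matrix.star_eq_conjTranspose U, Matrix.conjTranspose_conjTranspose, Matrix.mul_assoc]

lemma sqrt_spectral {M : Matrix ι ι ℂ} (hM : M.PosSemidef) :
    hM.sqrt = hM.1.eigenvectorUnitary.1 *
      diagonal (fun i => ((Real.sqrt (hM.1.eigenvalues i) : ℝ) : ℂ)) *
      star hM.1.eigenvectorUnitary.1 := rfl

lemma trace_sqrt_eq {M : Matrix ι ι ℂ} (hM : M.PosSemidef) :
    (Matrix.trace hM.sqrt).re = ∑ i, Real.sqrt (hM.1.eigenvalues i) := by
  rw [sqrt_spectral, conj_diag_trace _ (Matrix.mem_unitaryGroup_iff'.mp hM.1.eigenvectorUnitary.2),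
    Complex.re_sum]
  simp

lemma eig_le_one {X : Matrix ι ι ℂ} (hX : X.PosSemidef)
    (hX1 : ((1 : Matrix ι ι ℂ) - X).PosSemidef) (i : ι) : hX.1.eigenvalues i ≤ 1 := by
  set v := hX.1.eigenvectorBasis i with hv
  have hnorm : ((dotProduct (star ⇑v) ⇑v : ℂ)).re = 1 := by
    have h1 : ‖(v : EuclideanSpace ℂ ι)‖ = 1 := hX.1.eigenvectorBasis.orthonormal.1 i
    have h2 : dotProduct (star ⇑v) ⇑v = ∑ j, (starRingEnd ℂ) (v j) * v j := rfl
    rw [h2, Complex.re_sum]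
    have h3 : ∀ j, ((starRingEnd ℂ) (v j) * v j).re = ‖(v : EuclideanSpace ℂ ι) j‖ ^ 2 := by
      intro j
      rw [mul_comm, Complex.mul_conj]
      simp [Complex.sq_norm]
    rw [Finset.sum_congr rfl fun j _ => h3 j]
    have h4 := EuclideanSpace.norm_eq (v : EuclideanSpace ℂ ι)
    rw [h1] at h4
    have h5 : (0:ℝ) ≤ ∑ j, ‖(v : EuclideanSpace ℂ ι) j‖ ^ 2 :=
      Finset.sum_nonneg fun j _ => sq_nonneg _
    nlinarith [Real.sq_sqrt h5, h4]
  have h0 := hX1.re_dotProduct_nonneg ⇑v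
  rw [Matrix.sub_mulVec, Matrix.one_mulVec, dotProduct_sub] at h0
  simp only [RCLike.re_to_complex, Complex.sub_re] at h0
  rw [hnorm] at h0
  have heig := hX.1.eigenvalues_eq i
  rw [← hv] at heig
  simp only [RCLike.re_to_complex] at heig
  linarith [h0, heig.le, heig.ge]

end GentleHelpers

/-- **Lemma 8 (Gentle measurement).** If `ρ` is a state and `0 ≤ X ≤ 1` with
`1 − Tr(ρX) ≤ λ ≤ 1`, then `‖ρ − √X ρ √X‖₁ ≤ √(8λ)`. -/
theorem gentle_measurement {ι : Type} [Fintype ι] [DecidableEq ι]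
    (ρ Xop : Matrix ι ι ℂ) (hρ : IsState ρ) (hX : Xop.PosSemidef)
    (hX1 : ((1 : Matrix ι ι ℂ) - Xop).PosSemidef) (lam : ℝ)
    (h1 : 1 - (Matrix.trace (ρ * Xop)).re ≤ lam) (h2 : lam ≤ 1) :
    traceNorm (ρ - hX.sqrt * ρ * hX.sqrt) ≤ Real.sqrt (8 * lam) := by
  obtain ⟨hρpsd, hρtr⟩ := hρ
  set S := hX.sqrt with hSdef
  have hSps : S.PosSemidef := hX.posSemidef_sqrt
  have hSH : Sᴴ = S := hSps.1
  set r := hρpsd.sqrt with hrdef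
  have hrps : r.PosSemidef := hρpsd.posSemidef_sqrt
  have hrH : rᴴ = r := hrps.1
  have hrr : r * r = ρ := hρpsd.sqrt_mul_self
  have hSS : S * S = Xop := hX.sqrt_mul_self
  set D := ρ - S * ρ * S with hDdef
  have hDH : D.IsHermitian := by
    rw [Matrix.IsHermitian, hDdef, Matrix.conjTranspose_sub, Matrix.conjTranspose_mul,
      Matrix.conjTranspose_mul, hSH, hρpsd.1.eq, Matrix.mul_assoc]
  -- spectral data of D
  set U := hDH.eigenvectorUnitary.1 with hUdef
  set lm := hDH.eigenvalues with hlmdef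
  have hU : star U * U = 1 := Matrix.mem_unitaryGroup_iff'.mp hDH.eigenvectorUnitary.2
  have hU' : U * star U = 1 := Matrix.mem_unitaryGroup_iff.mp hDH.eigenvectorUnitary.2
  have hspec : D = U * diagonal (fun i => ((lm i : ℝ) : ℂ)) * star U := hDH.spectral_theorem
  -- trace norm of D equals sum of |lm i|
  have habs : traceNorm D = ∑ i, |lm i| := by
    have hDD := Matrix.posSemidef_conjTranspose_mul_self D
    have hP : (U * diagonal (fun i => ((|lm i| : ℝ) : ℂ)) * star U).PosSemidef :=
      conj_diag_psd U _ fun i => abs_nonneg _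
    have hfun : (fun i => ((|lm i| : ℝ) : ℂ) * ((|lm i| : ℝ) : ℂ))
        = fun i => ((lm i : ℝ) : ℂ) * ((lm i : ℝ) : ℂ) := by
      funext i
      rw [← Complex.ofReal_mul, ← Complex.ofReal_mul, abs_mul_abs_self]
    have hsq : (U * diagonal (fun i => ((|lm i| : ℝ) : ℂ)) * star U) ^ 2 = Dᴴ * D := by
      rw [pow_two, conj_diag_mul U hU, hDH.eq]
      conv_rhs => rw [hspec]
      rw [conj_diag_mul U hU, hfun]
    have heq := hP.eq_sqrt_of_sq_eq hDD hsq
    have : traceNorm D = (Matrix.trace hDD.sqrt).re := (trace_sqrt_eq hDD).symm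
    rw [traceNorm] at this ⊢
    rw [this, ← heq, conj_diag_trace U hU, Complex.re_sum]
    simp
  -- sign matrix C
  set sg : ι → ℝ := fun i => if lm i < 0 then -1 else 1 with hsgdef
  set C := U * diagonal (fun i => ((sg i : ℝ) : ℂ)) * star U with hCdef
  have hCH : Cᴴ = C := (conj_diag_herm U sg)
  have hCC : C * C = 1 := by
    rw [hCdef, conj_diag_mul U hU]
    have : (fun i => ((sg i : ℝ) : ℂ) * ((sg i : ℝ) : ℂ)) = fun _ => (1 : ℂ) := by
      funext i
      rw [hsgdef]
      by_cases h : lm i < 0 <;> simp [h]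
    rw [this, Matrix.diagonal_one, Matrix.mul_one, hU']
  have htrDC : (Matrix.trace (D * C)).re = ∑ i, |lm i| := by
    conv_lhs => rw [hspec, hCdef]
    rw [conj_diag_mul U hU, conj_diag_trace U hU, Complex.re_sum]
    refine Finset.sum_congr rfl fun i _ => ?_
    have : (((lm i : ℝ) : ℂ) * ((sg i : ℝ) : ℂ)) = (((lm i * sg i : ℝ)) : ℂ) := by push_cast; ring
    rw [this, Complex.ofReal_re, hsgdef]
    by_cases h : lm i < 0
    · simp [h, abs_of_neg h]
    · simp [h, abs_of_nonneg (not_lt.mp h)]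
  -- key bound : trace (ρ * (1-S)*(1-S)) ≤ lam
  set V := hX.1.eigenvectorUnitary.1 with hVdef
  set mu := hX.1.eigenvalues with hmudef
  have hV : star V * V = 1 := Matrix.mem_unitaryGroup_iff'.mp hX.1.eigenvectorUnitary.2
  have hV' : V * star V = 1 := Matrix.mem_unitaryGroup_iff.mp hX.1.eigenvectorUnitary.2
  have hXspec : Xop = V * diagonal (fun i => ((mu i : ℝ) : ℂ)) * star V := hX.1.spectral_theorem
  have hSspec : S = V * diagonal (fun i => ((Real.sqrt (mu i) : ℝ) : ℂ)) * star V :=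
    sqrt_spectral hX
  have hone : (1 : Matrix ι ι ℂ) = V * diagonal (fun _ => ((1 : ℝ) : ℂ)) * star V := by
    rw [show diagonal (fun _ : ι => ((1:ℝ):ℂ)) = (1 : Matrix ι ι ℂ) by simp [Matrix.diagonal_one],
      Matrix.mul_one, hV']
  have honeS : (1 : Matrix ι ι ℂ) - S
      = V * diagonal (fun i => ((1 - Real.sqrt (mu i) : ℝ) : ℂ)) * star V := by
    conv_lhs => rw [hone, hSspec]
    rw [conj_diag_sub]
    congr 2
    funext i
    push_cast
    ring
  have honeX : (1 : Matrix ι ι ℂ) - Xop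
      = V * diagonal (fun i => ((1 - mu i : ℝ) : ℂ)) * star V := by
    conv_lhs => rw [hone, hXspec]
    rw [conj_diag_sub]
    congr 2
    funext i
    push_cast
    ring
  have hmu0 : ∀ i, 0 ≤ mu i := fun i => hX.eigenvalues_nonneg i
  have hmu1 : ∀ i, mu i ≤ 1 := fun i => eig_le_one hX hX1 i
  have hWpsd : (((1 : Matrix ι ι ℂ) - Xop)
      - ((1 : Matrix ι ι ℂ) - S) * ((1 : Matrix ι ι ℂ) - S)).PosSemidef := by
    rw [honeX, honeS, conj_diag_mul V hV]
    have hfun : (fun i => ((1 - mu i : ℝ) : ℂ)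
          - ((1 - Real.sqrt (mu i) : ℝ) : ℂ) * ((1 - Real.sqrt (mu i) : ℝ) : ℂ))
        = fun i => (((2 * Real.sqrt (mu i) * (1 - Real.sqrt (mu i)) : ℝ)) : ℂ) := by
      funext i
      have hsq : Real.sqrt (mu i) * Real.sqrt (mu i) = mu i :=
        Real.mul_self_sqrt (hmu0 i)
      have hr : (1 - mu i) - (1 - Real.sqrt (mu i)) * (1 - Real.sqrt (mu i))
          = 2 * Real.sqrt (mu i) * (1 - Real.sqrt (mu i)) := by nlinarith [hsq]
      rw [← Complex.ofReal_mul, ← Complex.ofReal_sub, hr]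
    rw [conj_diag_sub, hfun]
    exact conj_diag_psd V _ fun i => by
      have h1 : 0 ≤ Real.sqrt (mu i) := Real.sqrt_nonneg _
      have h2 : Real.sqrt (mu i) ≤ 1 := Real.sqrt_le_one.mpr (hmu1 i)
      nlinarith
  have htrX1 : (Matrix.trace (ρ * ((1 : Matrix ι ι ℂ) - Xop))).re
      = 1 - (Matrix.trace (ρ * Xop)).re := by
    rw [Matrix.mul_sub, Matrix.mul_one, Matrix.trace_sub, Complex.sub_re, hρtr]
    simp
  have hkey : (Matrix.trace (ρ * (((1 : Matrix ι ι ℂ) - S) * ((1 : Matrix ι ι ℂ) - S)))).re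
      ≤ lam := by
    have h0 := psd_trace_mul_re_nonneg hρpsd hWpsd
    have hsub : ρ * (((1 : Matrix ι ι ℂ) - Xop)
          - ((1 : Matrix ι ι ℂ) - S) * ((1 : Matrix ι ι ℂ) - S))
        = ρ * ((1 : Matrix ι ι ℂ) - Xop)
          - ρ * (((1 : Matrix ι ι ℂ) - S) * ((1 : Matrix ι ι ℂ) - S)) := by
      noncomm_ring
    rw [hsub, Matrix.trace_sub, Complex.sub_re, htrX1] at h0
    linarith
  -- trace(ρ X) ≤ 1
  have htrRX : (Matrix.trace (ρ * Xop)).re ≤ 1 := by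
    have := psd_trace_mul_re_nonneg hρpsd hX1
    rw [htrX1] at this
    linarith
  have hlam0 : 0 ≤ lam := by linarith
  -- splitting
  have hsplit : D * C = ((1 : Matrix ι ι ℂ) - S) * ρ * C
      + S * ρ * (((1 : Matrix ι ι ℂ) - S) * C) := by
    rw [hDdef]
    noncomm_ring
  -- term 1
  have ht1 : (Matrix.trace (((1 : Matrix ι ι ℂ) - S) * ρ * C)).re
      ≤ Real.sqrt lam := by
    have hA : (r * ((1 : Matrix ι ι ℂ) - S))ᴴ = ((1 : Matrix ι ι ℂ) - S) * r := by
      rw [Matrix.conjTranspose_mul, hrH, Matrix.conjTranspose_sub, Matrix.conjTranspose_one, hSH]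
    have hB : (r * C)ᴴ = C * r := by
      rw [Matrix.conjTranspose_mul, hrH, hCH]
    have e1 : (r * ((1 : Matrix ι ι ℂ) - S))ᴴ * (r * C)
        = ((1 : Matrix ι ι ℂ) - S) * ρ * C := by
      rw [hA, Matrix.mul_assoc, ← Matrix.mul_assoc r, hrr, ← Matrix.mul_assoc]
    have e2 : ((Matrix.trace ((r * ((1 : Matrix ι ι ℂ) - S))ᴴ * (r * ((1 : Matrix ι ι ℂ) - S))))).re
        = (Matrix.trace (ρ * (((1 : Matrix ι ι ℂ) - S) * ((1 : Matrix ι ι ℂ) - S)))).re := by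
      have em : (r * ((1 : Matrix ι ι ℂ) - S))ᴴ * (r * ((1 : Matrix ι ι ℂ) - S))
          = ((1 : Matrix ι ι ℂ) - S) * ρ * ((1 : Matrix ι ι ℂ) - S) := by
        rw [hA, ← hrr]; noncomm_ring
      rw [em, Matrix.trace_mul_cycle, Matrix.trace_mul_comm]
    have e3 : ((Matrix.trace ((r * C)ᴴ * (r * C)))).re = 1 := by
      have em : (r * C)ᴴ * (r * C) = C * ρ * C := by
        rw [hB, ← hrr]; noncomm_ring
      rw [em, Matrix.trace_mul_cycle, hCC, Matrix.one_mul, hρtr]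
      simp
    calc (Matrix.trace (((1 : Matrix ι ι ℂ) - S) * ρ * C)).re
        = (Matrix.trace ((r * ((1 : Matrix ι ι ℂ) - S))ᴴ * (r * C))).re := by rw [e1]
      _ ≤ Real.sqrt ((Matrix.trace ((r * ((1 : Matrix ι ι ℂ) - S))ᴴ * (r * ((1 : Matrix ι ι ℂ) - S)))).re)
          * Real.sqrt ((Matrix.trace ((r * C)ᴴ * (r * C))).re) := trace_cs _ _
      _ ≤ Real.sqrt lam * Real.sqrt 1 := by
          apply mul_le_mul
          · rw [e2]; exact Real.sqrt_le_sqrt hkey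
          · rw [e3]
          · exact Real.sqrt_nonneg _
          · exact Real.sqrt_nonneg _
      _ = Real.sqrt lam := by rw [Real.sqrt_one, mul_one]
  -- term 2
  have ht2 : (Matrix.trace (S * ρ * (((1 : Matrix ι ι ℂ) - S) * C))).re
      ≤ Real.sqrt lam := by
    have hA : (r * S)ᴴ = S * r := by
      rw [Matrix.conjTranspose_mul, hrH, hSH]
    have hB : (r * (((1 : Matrix ι ι ℂ) - S) * C))ᴴ = C * ((1 : Matrix ι ι ℂ) - S) * r := by
      rw [Matrix.conjTranspose_mul, Matrix.conjTranspose_mul, hrH, hCH,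
        Matrix.conjTranspose_sub, Matrix.conjTranspose_one, hSH, Matrix.mul_assoc]
    have e1 : (r * S)ᴴ * (r * (((1 : Matrix ι ι ℂ) - S) * C))
        = S * ρ * (((1 : Matrix ι ι ℂ) - S) * C) := by
      rw [hA, Matrix.mul_assoc, ← Matrix.mul_assoc r, hrr, ← Matrix.mul_assoc]
    have e2 : ((Matrix.trace ((r * S)ᴴ * (r * S)))).re = (Matrix.trace (ρ * Xop)).re := by
      have em : (r * S)ᴴ * (r * S) = S * ρ * S := by
        rw [hA, ← hrr]; noncomm_ring
      rw [em, Matrix.trace_mul_cycle, hSS, Matrix.trace_mul_comm]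
    have e3 : ((Matrix.trace ((r * (((1 : Matrix ι ι ℂ) - S) * C))ᴴ
        * (r * (((1 : Matrix ι ι ℂ) - S) * C)))).re)
        = (Matrix.trace (ρ * (((1 : Matrix ι ι ℂ) - S) * ((1 : Matrix ι ι ℂ) - S)))).re := by
      have em : (r * (((1 : Matrix ι ι ℂ) - S) * C))ᴴ * (r * (((1 : Matrix ι ι ℂ) - S) * C))
          = (C * ((1 : Matrix ι ι ℂ) - S) * ρ * ((1 : Matrix ι ι ℂ) - S)) * C := by
        rw [hB, ← hrr]; noncomm_ring
      rw [em, Matrix.trace_mul_comm]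
      have em2 : C * (C * ((1 : Matrix ι ι ℂ) - S) * ρ * ((1 : Matrix ι ι ℂ) - S))
          = (C * C) * (((1 : Matrix ι ι ℂ) - S) * ρ * ((1 : Matrix ι ι ℂ) - S)) := by
        noncomm_ring
      rw [em2, hCC, Matrix.one_mul, Matrix.trace_mul_cycle, Matrix.trace_mul_comm]
    calc (Matrix.trace (S * ρ * (((1 : Matrix ι ι ℂ) - S) * C))).re
        = (Matrix.trace ((r * S)ᴴ * (r * (((1 : Matrix ι ι ℂ) - S) * C)))).re := by rw [e1]
      _ ≤ Real.sqrt ((Matrix.trace ((r * S)ᴴ * (r * S))).re)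
          * Real.sqrt ((Matrix.trace ((r * (((1 : Matrix ι ι ℂ) - S) * C))ᴴ
            * (r * (((1 : Matrix ι ι ℂ) - S) * C)))).re) := trace_cs _ _
      _ ≤ 1 * Real.sqrt lam := by
          apply mul_le_mul
          · rw [e2]; exact Real.sqrt_le_one.mpr htrRX
          · rw [e3]; exact Real.sqrt_le_sqrt hkey
          · exact Real.sqrt_nonneg _
          · norm_num
      _ = Real.sqrt lam := by rw [one_mul]
  -- conclude
  have hfinal : traceNorm D ≤ 2 * Real.sqrt lam := by
    rw [habs, ← htrDC, hsplit, Matrix.trace_add, Complex.add_re]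
    linarith [ht1, ht2]
  have h8 : 2 * Real.sqrt lam ≤ Real.sqrt (8 * lam) := by
    rw [show (8 : ℝ) * lam = 4 * lam + 4 * lam by ring]
    have : 2 * Real.sqrt lam = Real.sqrt (4 * lam) := by
      rw [show (4:ℝ) * lam = 2^2 * lam by ring, Real.sqrt_mul (by positivity),
        Real.sqrt_sq (by norm_num : (0:ℝ) ≤ 2)]
    rw [this]
    exact Real.sqrt_le_sqrt (by linarith [Real.sqrt_nonneg lam, hlam0])
  exact hfinal.trans h8
end
end
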